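/- arXiv:1612.05201 — 3 statements merged into one kernel-verified Lean document; each statement's English description precedes it below -/
import Mathlib

section
/- Let L be an n×n Laplacian matrix with eigenprojection J̄ = L^⊢. For each δ > 0 let v(δ) ∈ ℝⁿ be a vector with nonnegative entries and s(δ) = Σᵢ v(δ)ᵢ > 0. Suppose δ/s(δ) → 0 as δ → 0⁺ and v(δ)/s(δ) converges to a vector ṽ ∈ ℝⁿ as δ → 0⁺. Then the eigenprojection of L₀ + H_{δ,v(δ)} converges, as δ → 0⁺, to the rank-one matrix 1′·[ṽᵀJ̄ 0] (the outer product of the all-ones column vector 1′ of length n+1 with the row vector whose first n entries are ṽᵀJ̄ and whose last entry is 0). -/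
open Matrix Filter Topology Module

/-- The index of a square real matrix: the smallest `k` with
`rank (A^(k+1)) = rank (A^k)`. -/
noncomputable def matIndex {m : Type*} [Fintype m] [DecidableEq m]
    (A : Matrix m m ℝ) : ℕ :=
  sInf {k : ℕ | (A ^ (k + 1)).rank = (A ^ k).rank}

/-- `Q` is the eigenprojection of `A` corresponding to the eigenvalue `0`:
an idempotent matrix whose range is the null space of `A ^ ind A` and whose
null space is the range of `A ^ ind A`. -/
def IsEigenprojection {m : Type*} [Fintype m] [DecidableEq m]
    (A Q : Matrix m m ℝ) : Prop :=
  Q * Q = Q ∧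
  LinearMap.range Q.mulVecLin = LinearMap.ker (A ^ matIndex A).mulVecLin ∧
  LinearMap.ker Q.mulVecLin = LinearMap.range (A ^ matIndex A).mulVecLin

/-- A Laplacian matrix: nonpositive off-diagonal entries and zero row sums. -/
def IsLaplacian {m : Type*} [Fintype m] (L : Matrix m m ℝ) : Prop :=
  (∀ i j, i ≠ j → L i j ≤ 0) ∧ ∀ i, ∑ j, L i j = 0

/-- The block matrix `L₀ = [[L, 0], [0ᵀ, 0]]`. -/
def hubL0 {n : ℕ} (L : Matrix (Fin n) (Fin n) ℝ) :
    Matrix (Fin n ⊕ Unit) (Fin n ⊕ Unit) ℝ :=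
  Matrix.fromBlocks L 0 0 0

/-- The block matrix `H_I = [[I, -1], [0ᵀ, 0]]`. -/
def hubHI (n : ℕ) : Matrix (Fin n ⊕ Unit) (Fin n ⊕ Unit) ℝ :=
  Matrix.fromBlocks 1 (Matrix.of fun _ _ => (-1 : ℝ)) 0 0

/-- The block matrix `H_v = [[0, 0], [-vᵀ, s]]` where `s = Σᵢ vᵢ`. -/
def hubHv {n : ℕ} (v : Fin n → ℝ) : Matrix (Fin n ⊕ Unit) (Fin n ⊕ Unit) ℝ :=
  Matrix.fromBlocks 0 0 (Matrix.of fun _ j => -v j) (Matrix.of fun _ _ => ∑ i, v i)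

/-- `H_{δ,v} = δ·H_I + H_v`. -/
def hubH {n : ℕ} (δ : ℝ) (v : Fin n → ℝ) :
    Matrix (Fin n ⊕ Unit) (Fin n ⊕ Unit) ℝ :=
  δ • hubHI n + hubHv v


lemma mulVecLin_inj {m : Type*} [Fintype m] [DecidableEq m] {A B : Matrix m m ℝ}
    (h : ∀ x, A *ᵥ x = B *ᵥ x) : A = B := by
  ext i j
  have := congrFun (h (Pi.single j 1)) i
  simpa [Matrix.mulVec_single_one] using this

/-- two idempotent matrices with same range and kernel agree -/
lemma idem_unique {m : Type*} [Fintype m] [DecidableEq m] {P Q : Matrix m m ℝ}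
    (hP : P * P = P) (hQ : Q * Q = Q)
    (hr : LinearMap.range P.mulVecLin = LinearMap.range Q.mulVecLin)
    (hk : LinearMap.ker P.mulVecLin = LinearMap.ker Q.mulVecLin) : P = Q := by
  apply mulVecLin_inj
  intro x
  have hPx : Q *ᵥ (P *ᵥ x) = P *ᵥ x := by
    have hmem : P *ᵥ x ∈ LinearMap.range Q.mulVecLin := by
      rw [← hr]; exact ⟨x, rfl⟩
    obtain ⟨y, hy⟩ := hmem
    simp only [Matrix.mulVecLin_apply] at hy
    rw [← hy, Matrix.mulVec_mulVec, hQ]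
  have hker : P *ᵥ (x - P *ᵥ x) = 0 := by
    rw [Matrix.mulVec_sub, Matrix.mulVec_mulVec, hP, sub_self]
  have hker2 : Q *ᵥ (x - P *ᵥ x) = 0 := by
    have : x - P *ᵥ x ∈ LinearMap.ker P.mulVecLin := by
      simpa [LinearMap.mem_ker, Matrix.mulVecLin_apply] using hker
    rw [hk] at this
    simpa [LinearMap.mem_ker, Matrix.mulVecLin_apply] using this
  rw [Matrix.mulVec_sub] at hker2
  have := sub_eq_zero.mp hker2
  rw [this, hPx]


lemma lap_diag_nonneg {m : Type*} [Fintype m] [DecidableEq m] {L : Matrix m m ℝ}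
    (hL : IsLaplacian L) (i : m) : 0 ≤ L i i := by
  have h := hL.2 i
  rw [← Finset.add_sum_erase _ _ (Finset.mem_univ i)] at h
  have : ∑ j ∈ Finset.univ.erase i, L i j ≤ 0 :=
    Finset.sum_nonpos fun j hj => hL.1 i j (fun h => (Finset.mem_erase.mp hj).1 h.symm)
  linarith

lemma lap_ker_sq {m : Type*} [Fintype m] [DecidableEq m] {L : Matrix m m ℝ}
    (hL : IsLaplacian L) (x : m → ℝ) (h2 : L *ᵥ (L *ᵥ x) = 0) : L *ᵥ x = 0 := by
  classical
  set y := L *ᵥ x with hy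
  set c : ℝ := 1 + ∑ i, L i i with hc
  have hdiag : ∀ i, 0 ≤ L i i := lap_diag_nonneg hL
  have hcpos : 0 < c := by
    have : 0 ≤ ∑ i, L i i := Finset.sum_nonneg fun i _ => hdiag i
    simp only [hc]; linarith
  set B : Matrix m m ℝ := 1 - c⁻¹ • L with hB
  have hBnn : ∀ i j, 0 ≤ B i j := by
    intro i j
    by_cases hij : i = j
    · subst hij
      have : L i i ≤ c := by
        have := Finset.single_le_sum (fun i _ => hdiag i) (Finset.mem_univ i)
        simp only [hc]; linarith
      simp only [hB, Matrix.sub_apply, Matrix.one_apply_eq, Matrix.smul_apply, smul_eq_mul]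
      have h3 : c⁻¹ * L i i ≤ 1 := by
        rw [inv_mul_le_iff₀ hcpos]; linarith
      linarith
    · have := hL.1 i j hij
      simp only [hB, Matrix.sub_apply, Matrix.one_apply_ne hij, Matrix.smul_apply, smul_eq_mul]
      have : c⁻¹ * L i j ≤ 0 := mul_nonpos_of_nonneg_of_nonpos (by positivity) this
      linarith
  have hBrow : ∀ i, ∑ j, B i j = 1 := by
    intro i
    simp only [hB, Matrix.sub_apply, Matrix.smul_apply, smul_eq_mul, Finset.sum_sub_distrib,
      ← Finset.mul_sum, hL.2 i, mul_zero, sub_zero]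
    simp [Matrix.one_apply]
  -- contraction bound
  have hbound : ∀ (z : m → ℝ) (C : ℝ), (∀ j, |z j| ≤ C) → ∀ i, |(B *ᵥ z) i| ≤ C := by
    intro z C hz i
    have : |(B *ᵥ z) i| ≤ ∑ j, B i j * C := by
      calc |(B *ᵥ z) i| = |∑ j, B i j * z j| := by simp [Matrix.mulVec, dotProduct]
        _ ≤ ∑ j, |B i j * z j| := Finset.abs_sum_le_sum_abs _ _
        _ ≤ ∑ j, B i j * C := by
            apply Finset.sum_le_sum
            intro j _
            rw [abs_mul, abs_of_nonneg (hBnn i j)]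
            exact mul_le_mul_of_nonneg_left (hz j) (hBnn i j)
    rwa [← Finset.sum_mul, hBrow i, one_mul] at this
  have hBy : B *ᵥ y = y := by
    simp [hB, Matrix.sub_mulVec, Matrix.smul_mulVec, h2]
  have hiter : ∀ k : ℕ, ∀ j, |x j - (k / c) * y j| ≤ ∑ i, |x i| := by
    intro k
    induction k with
    | zero =>
      intro j
      simp only [Nat.cast_zero, zero_div, zero_mul, sub_zero]
      exact Finset.single_le_sum (fun i _ => abs_nonneg (x i)) (Finset.mem_univ j)
    | succ k ih =>
      have key : (fun j => x j - ((k+1 : ℕ) / c) * y j) = B *ᵥ (fun j => x j - (k / c) * y j) := by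
        funext j
        have h1 : (B *ᵥ fun j => x j - (↑k / c) * y j) = B *ᵥ x - (↑k / c) • (B *ᵥ y) := by
          rw [← Matrix.mulVec_smul]
          rw [← Matrix.mulVec_sub]
          congr 1
        rw [h1, hBy]
        have hBx : B *ᵥ x = x - c⁻¹ • y := by
          simp [hB, Matrix.sub_mulVec, Matrix.smul_mulVec, hy]
        rw [hBx]
        simp only [Pi.sub_apply, Pi.smul_apply, smul_eq_mul, Nat.cast_add, Nat.cast_one]
        field_simp
        ring
      intro j
      have := congrFun key j
      rw [this]
      exact hbound _ _ ih j
  -- conclude y = 0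
  funext j
  by_contra hyj
  have hyj' : 0 < |y j| := abs_pos.mpr (by simpa using hyj)
  obtain ⟨k, hk⟩ := exists_nat_gt ((∑ i, |x i| + |x j|) * c / |y j|)
  have h1 := hiter k j
  have h2' : (k / c) * |y j| - |x j| ≤ |x j - (k / c) * y j| := by
    have := abs_sub_abs_le_abs_sub ((k / c) * y j) (x j)
    rw [abs_sub_comm] at this
    rw [abs_mul, abs_of_nonneg (by positivity : (0:ℝ) ≤ (k:ℝ)/c)] at this
    linarith
  have : (k : ℝ) / c * |y j| ≤ ∑ i, |x i| + |x j| := by linarith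
  have : (k : ℝ) ≤ (∑ i, |x i| + |x j|) * c / |y j| := by
    rw [le_div_iff₀ hyj']
    rw [div_mul_eq_mul_div, div_le_iff₀ hcpos] at this
    nlinarith [abs_nonneg (y j)]
  linarith


lemma lap_det_add_ne {m : Type*} [Fintype m] [DecidableEq m] {L : Matrix m m ℝ}
    (hL : IsLaplacian L) {δ : ℝ} (hδ : 0 < δ) : (L + δ • (1 : Matrix m m ℝ)).det ≠ 0 := by
  classical
  intro hdet
  obtain ⟨x, hx0, hx⟩ := (Matrix.exists_mulVec_eq_zero_iff).mpr hdet
  have hne : Nonempty m := by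
    by_contra h
    rw [not_nonempty_iff] at h
    exact hx0 (funext fun j => (h.false j).elim)
  -- pick index with max |x i|
  obtain ⟨i, -, hi⟩ := Finset.exists_max_image Finset.univ (fun i => |x i|)
    ⟨Classical.arbitrary m, Finset.mem_univ _⟩
  have hrow := congrFun hx i
  simp only [Matrix.add_mulVec, Matrix.smul_mulVec, Matrix.one_mulVec, Pi.add_apply,
    Pi.smul_apply, smul_eq_mul, Pi.zero_apply] at hrow
  -- (L *ᵥ x) i + δ * x i = 0
  have hLx : (L *ᵥ x) i = ∑ j, L i j * x j := by simp [Matrix.mulVec, dotProduct]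
  have hsplit : ∑ j, L i j * x j = L i i * x i + ∑ j ∈ Finset.univ.erase i, L i j * x j := by
    rw [← Finset.add_sum_erase _ _ (Finset.mem_univ i)]
  have hLii : L i i = ∑ j ∈ Finset.univ.erase i, (- L i j) := by
    have h := hL.2 i
    rw [← Finset.add_sum_erase _ _ (Finset.mem_univ i)] at h
    rw [Finset.sum_neg_distrib]
    linarith
  have hbd : |∑ j ∈ Finset.univ.erase i, L i j * x j| ≤ L i i * |x i| := by
    calc |∑ j ∈ Finset.univ.erase i, L i j * x j| ≤ ∑ j ∈ Finset.univ.erase i, |L i j * x j| :=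
          Finset.abs_sum_le_sum_abs _ _
      _ ≤ ∑ j ∈ Finset.univ.erase i, (- L i j) * |x i| := by
          apply Finset.sum_le_sum
          intro j hj
          have hne : i ≠ j := fun h => (Finset.mem_erase.mp hj).1 h.symm
          rw [abs_mul, abs_of_nonpos (hL.1 i j hne)]
          exact mul_le_mul_of_nonneg_left (hi j (Finset.mem_univ j)) (by linarith [hL.1 i j hne])
      _ = L i i * |x i| := by rw [← Finset.sum_mul, ← hLii]
  -- row equation: L i i * x i + rest + δ x i = 0
  have heq : (L i i + δ) * x i = -(∑ j ∈ Finset.univ.erase i, L i j * x j) := by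
    rw [hLx, hsplit] at hrow; ring_nf; ring_nf at hrow; linarith
  have habs : (L i i + δ) * |x i| ≤ L i i * |x i| := by
    have h1 : |(L i i + δ) * x i| = (L i i + δ) * |x i| := by
      rw [abs_mul, abs_of_nonneg]
      have : 0 ≤ L i i := by
        rw [hLii]
        exact Finset.sum_nonneg fun j hj =>
          neg_nonneg.mpr (hL.1 i j fun h => (Finset.mem_erase.mp hj).1 h.symm)
      linarith
    rw [← h1, heq, abs_neg]
    exact hbd
  have hxi : |x i| ≤ 0 := by nlinarith
  apply hx0
  funext j
  have := hi j (Finset.mem_univ j)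
  have : |x j| ≤ 0 := le_trans this hxi
  simpa using le_antisymm this (abs_nonneg _)


section Aux

variable {m : Type*} [Fintype m] [DecidableEq m]

/-- helper: if ker M = span x (x ≠ 0) and u ᵥ* M = 0 with u ⬝ᵥ x ≠ 0, then
matIndex M = 1 and the explicit projection is the eigenprojection. -/
lemma eigenprojection_of_rank_one_ker {M : Matrix m m ℝ} {x u : m → ℝ}
    (hker : LinearMap.ker M.mulVecLin = Submodule.span ℝ {x})
    (hx : x ≠ 0) (hu : u ᵥ* M = 0) (hux : u ⬝ᵥ x ≠ 0) :
    IsEigenprojection M ((u ⬝ᵥ x)⁻¹ • Matrix.vecMulVec x u) := by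
  classical
  have hNddim : finrank ℝ (m → ℝ) = Fintype.card m := Module.finrank_fintype_fun_eq_card ℝ
  have hkerdim : finrank ℝ (LinearMap.ker M.mulVecLin) = 1 := by
    rw [hker]
    exact finrank_span_singleton hx
  have hrankM : M.rank + 1 = Fintype.card m := by
    have := LinearMap.finrank_range_add_finrank_ker M.mulVecLin
    rw [hkerdim, hNddim] at this
    exact this
  -- dot with u kills range M
  have hdot : ∀ y, u ⬝ᵥ (M *ᵥ y) = 0 := by
    intro y
    rw [Matrix.dotProduct_mulVec, hu, zero_dotProduct]
  -- ker M² = ker M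
  have hker2 : LinearMap.ker (M * M).mulVecLin = LinearMap.ker M.mulVecLin := by
    apply le_antisymm
    · intro z hz
      simp only [LinearMap.mem_ker, Matrix.mulVecLin_apply, ← Matrix.mulVec_mulVec] at hz ⊢
      have : M *ᵥ z ∈ LinearMap.ker M.mulVecLin := by
        simpa [LinearMap.mem_ker, Matrix.mulVecLin_apply] using hz
      rw [hker, Submodule.mem_span_singleton] at this
      obtain ⟨c, hc⟩ := this
      have h0 : u ⬝ᵥ (M *ᵥ z) = 0 := hdot z
      rw [← hc, dotProduct_smul, smul_eq_mul] at h0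
      rcases mul_eq_zero.mp h0 with h | h
      · rw [← hc, h, zero_smul]
      · exact absurd h hux
    · intro z hz
      simp only [LinearMap.mem_ker, Matrix.mulVecLin_apply] at hz ⊢
      rw [← Matrix.mulVec_mulVec, hz, Matrix.mulVec_zero]
  have hrank2 : (M * M).rank = M.rank := by
    have h1 := LinearMap.finrank_range_add_finrank_ker (M * M).mulVecLin
    have h2 := LinearMap.finrank_range_add_finrank_ker M.mulVecLin
    rw [hker2] at h1
    rw [hNddim] at h1 h2
    unfold Matrix.rank
    omega
  have hMne : M.rank ≠ Fintype.card m := by omega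
  have hindex : matIndex M = 1 := by
    have h1mem : 1 ∈ {k : ℕ | (M ^ (k + 1)).rank = (M ^ k).rank} := by
      have : M ^ (1 + 1) = M * M := by rw [pow_succ, pow_one]
      simp only [Set.mem_setOf_eq, this, pow_one]
      exact hrank2
    have h0mem : 0 ∉ {k : ℕ | (M ^ (k + 1)).rank = (M ^ k).rank} := by
      simp only [Set.mem_setOf_eq, zero_add, pow_one, pow_zero]
      rw [Matrix.rank_one]
      exact hMne
    apply le_antisymm (Nat.sInf_le h1mem)
    rw [Nat.one_le_iff_ne_zero]
    intro h0
    have := Nat.sInf_mem (⟨1, h1mem⟩ : Set.Nonempty _)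
    rw [h0] at this
    exact h0mem this
  set c : ℝ := (u ⬝ᵥ x)⁻¹ with hc
  set P : Matrix m m ℝ := c • Matrix.vecMulVec x u with hP
  have hPmul : ∀ z, P *ᵥ z = (c * (u ⬝ᵥ z)) • x := by
    intro z
    funext i
    simp only [hP, Matrix.smul_mulVec, Pi.smul_apply, smul_eq_mul]
    rw [show (Matrix.vecMulVec x u *ᵥ z) i = ∑ j, x i * u j * z j by
      simp [Matrix.mulVec, dotProduct, Matrix.vecMulVec_apply]]
    simp only [dotProduct]
    rw [show c * (∑ j, u j * z j) * x i = ∑ j, c * (u j * z j) * x i by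
      rw [Finset.mul_sum, Finset.sum_mul]]
    rw [Finset.mul_sum]
    apply Finset.sum_congr rfl
    intro j _
    ring
  have hPx : P *ᵥ x = x := by
    rw [hPmul, hc, inv_mul_cancel₀ hux, one_smul]
  refine ⟨?_, ?_, ?_⟩
  · -- P * P = P
    ext i j
    rw [Matrix.mul_apply]
    simp only [hP, Matrix.smul_apply, Matrix.vecMulVec_apply, smul_eq_mul]
    have : ∑ k, c * (x i * u k) * (c * (x k * u j)) = c * c * (u ⬝ᵥ x) * (x i * u j) := by
      rw [dotProduct, show c * c * (∑ k, u k * x k) * (x i * u j)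
          = ∑ k, c * c * (u k * x k) * (x i * u j) by rw [Finset.mul_sum, Finset.sum_mul]]
      apply Finset.sum_congr rfl
      intro k _
      ring
    rw [this, hc]
    field_simp
  · -- range P = ker M^1
    rw [hindex, pow_one, hker]
    apply le_antisymm
    · rintro y ⟨z, rfl⟩
      simp only [Matrix.mulVecLin_apply]
      rw [hPmul]
      exact Submodule.smul_mem _ _ (Submodule.mem_span_singleton_self x)
    · rw [Submodule.span_le, Set.singleton_subset_iff]
      exact ⟨x, hPx⟩
  · -- ker P = range M^1
    rw [hindex, pow_one]
    have hle : LinearMap.range M.mulVecLin ≤ LinearMap.ker P.mulVecLin := by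
      rintro y ⟨z, rfl⟩
      simp only [LinearMap.mem_ker, Matrix.mulVecLin_apply]
      rw [hPmul, hdot, mul_zero, zero_smul]
    have hrangeP : LinearMap.range P.mulVecLin = Submodule.span ℝ {x} := by
      apply le_antisymm
      · rintro y ⟨z, rfl⟩
        simp only [Matrix.mulVecLin_apply]
        rw [hPmul]
        exact Submodule.smul_mem _ _ (Submodule.mem_span_singleton_self x)
      · rw [Submodule.span_le, Set.singleton_subset_iff]
        exact ⟨x, hPx⟩
    have hdimP : finrank ℝ (LinearMap.ker P.mulVecLin) = M.rank := by
      have h2 := LinearMap.finrank_range_add_finrank_ker P.mulVecLin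
      rw [hrangeP, finrank_span_singleton hx, hNddim] at h2
      omega
    exact (Submodule.eq_of_le_of_finrank_eq hle (by rw [hdimP]; rfl)).symm
end Aux


lemma lap_matIndex {m : Type*} [Fintype m] [DecidableEq m] [Nonempty m] {L : Matrix m m ℝ}
    (hL : IsLaplacian L) : matIndex L = 1 := by
  classical
  have hones : L *ᵥ (fun _ => (1:ℝ)) = 0 := by
    funext i
    simpa [Matrix.mulVec, dotProduct] using hL.2 i
  have honesne : (fun _ => (1:ℝ)) ≠ (0 : m → ℝ) := by
    intro h
    have := congrFun h (Classical.arbitrary m)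
    norm_num at this
  have hkerne : LinearMap.ker L.mulVecLin ≠ ⊥ := by
    intro h
    rw [Submodule.eq_bot_iff] at h
    exact honesne (h _ (by simpa [LinearMap.mem_ker, Matrix.mulVecLin_apply] using hones))
  have hkerpos : 0 < finrank ℝ (LinearMap.ker L.mulVecLin) := by
    rw [Nat.pos_iff_ne_zero]
    intro h
    exact hkerne (Submodule.finrank_eq_zero.mp h)
  have hNddim : finrank ℝ (m → ℝ) = Fintype.card m := Module.finrank_fintype_fun_eq_card ℝ
  have hrk := LinearMap.finrank_range_add_finrank_ker L.mulVecLin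
  rw [hNddim] at hrk
  have hMne : L.rank ≠ Fintype.card m := by
    unfold Matrix.rank
    omega
  have hker2 : LinearMap.ker (L * L).mulVecLin = LinearMap.ker L.mulVecLin := by
    apply le_antisymm
    · intro z hz
      simp only [LinearMap.mem_ker, Matrix.mulVecLin_apply] at hz ⊢
      rw [← Matrix.mulVec_mulVec] at hz
      exact lap_ker_sq hL z hz
    · intro z hz
      simp only [LinearMap.mem_ker, Matrix.mulVecLin_apply] at hz ⊢
      rw [← Matrix.mulVec_mulVec, hz, Matrix.mulVec_zero]
  have hrank2 : (L * L).rank = L.rank := by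
    have h1 := LinearMap.finrank_range_add_finrank_ker (L * L).mulVecLin
    rw [hker2, hNddim] at h1
    unfold Matrix.rank
    omega
  have h1mem : 1 ∈ {k : ℕ | (L ^ (k + 1)).rank = (L ^ k).rank} := by
    have : L ^ (1 + 1) = L * L := by rw [pow_succ, pow_one]
    simp only [Set.mem_setOf_eq, this, pow_one]
    exact hrank2
  have h0mem : 0 ∉ {k : ℕ | (L ^ (k + 1)).rank = (L ^ k).rank} := by
    simp only [Set.mem_setOf_eq, zero_add, pow_one, pow_zero]
    rw [Matrix.rank_one]
    exact hMne
  apply le_antisymm (Nat.sInf_le h1mem)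
  rw [Nat.one_le_iff_ne_zero]
  intro h0
  have := Nat.sInf_mem (⟨1, h1mem⟩ : Set.Nonempty _)
  rw [h0] at this
  exact h0mem this

section Jfacts
variable {m : Type*} [Fintype m] [DecidableEq m] {L J : Matrix m m ℝ}

lemma mulVecLin_inj' {A B : Matrix m m ℝ} (h : ∀ x, A *ᵥ x = B *ᵥ x) : A = B := by
  ext i j
  have := congrFun (h (Pi.single j 1)) i
  simpa [Matrix.mulVec_single_one] using this

lemma Jfacts (hJJ : J * J = J)
    (hrange : LinearMap.range J.mulVecLin = LinearMap.ker L.mulVecLin)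
    (hker : LinearMap.ker J.mulVecLin = LinearMap.range L.mulVecLin) :
    L * J = 0 ∧ J * L = 0 ∧ (L + J).det ≠ 0 := by
  have hLJ : L * J = 0 := by
    apply mulVecLin_inj'
    intro x
    rw [← Matrix.mulVec_mulVec, Matrix.zero_mulVec]
    have : J *ᵥ x ∈ LinearMap.ker L.mulVecLin := hrange ▸ ⟨x, rfl⟩
    simpa [LinearMap.mem_ker, Matrix.mulVecLin_apply] using this
  have hJL : J * L = 0 := by
    apply mulVecLin_inj'
    intro x
    rw [← Matrix.mulVec_mulVec, Matrix.zero_mulVec]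
    have : L *ᵥ x ∈ LinearMap.ker J.mulVecLin := hker ▸ ⟨x, rfl⟩
    simpa [LinearMap.mem_ker, Matrix.mulVecLin_apply] using this
  refine ⟨hLJ, hJL, ?_⟩
  intro hdet
  obtain ⟨x, hx0, hx⟩ := (Matrix.exists_mulVec_eq_zero_iff).mpr hdet
  rw [Matrix.add_mulVec] at hx
  have hJx : J *ᵥ x = 0 := by
    have := congrArg (fun y => J *ᵥ y) hx
    simp only [Matrix.mulVec_add, Matrix.mulVec_mulVec, hJL, hJJ, Matrix.zero_mulVec,
      Matrix.mulVec_zero, zero_add] at this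
    exact this
  have hLx : L *ᵥ x = 0 := by
    rw [hJx, add_zero] at hx
    exact hx
  have hxr : x ∈ LinearMap.range J.mulVecLin := by
    rw [hrange]
    simpa [LinearMap.mem_ker, Matrix.mulVecLin_apply] using hLx
  obtain ⟨y, hy⟩ := hxr
  simp only [Matrix.mulVecLin_apply] at hy
  apply hx0
  have : J *ᵥ (J *ᵥ y) = J *ᵥ x := by rw [hy]
  rw [Matrix.mulVec_mulVec, hJJ, hy, hJx] at this
  exact this

lemma resolvent_formula (hLJ : L * J = 0) (hJL : J * L = 0) (hJJ : J * J = J)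
    {δ : ℝ} (hδ : 0 < δ) (hTdet : (L + J + δ • (1 : Matrix m m ℝ)).det ≠ 0) :
    (L + δ • (1 : Matrix m m ℝ))⁻¹
      = δ⁻¹ • J + (L + J + δ • (1 : Matrix m m ℝ))⁻¹ * (1 - J) := by
  set T : Matrix m m ℝ := L + J + δ • 1 with hT
  have hTinv : T * T⁻¹ = 1 := Matrix.mul_nonsing_inv T (isUnit_iff_ne_zero.mpr hTdet)
  have hJT : J * T = (1 + δ) • J := by
    rw [hT, Matrix.mul_add, Matrix.mul_add, hJL, hJJ]
    rw [Matrix.mul_smul, Matrix.mul_one]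
    rw [zero_add, add_smul, one_smul]
  have hJTinv : J * T⁻¹ = (1 + δ)⁻¹ • J := by
    have h1δ : (1 : ℝ) + δ ≠ 0 := by linarith
    have := congrArg (fun X => (1+δ)⁻¹ • (X * T⁻¹)) hJT
    simp only [Matrix.mul_assoc, hTinv, Matrix.mul_one, Matrix.smul_mul, smul_smul,
      inv_mul_cancel₀ h1δ, one_smul] at this
    exact this.symm
  apply Matrix.inv_eq_right_inv
  rw [Matrix.mul_add]
  have h1 : (L + δ • (1 : Matrix m m ℝ)) * (δ⁻¹ • J) = J := by
    rw [Matrix.add_mul, Matrix.mul_smul, hLJ, smul_zero, Matrix.smul_mul,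
      Matrix.one_mul, smul_smul, mul_inv_cancel₀ (ne_of_gt hδ), one_smul, zero_add]
  have h2 : (L + δ • (1 : Matrix m m ℝ)) * (T⁻¹ * (1 - J)) = 1 - J := by
    have hLd : L + δ • (1 : Matrix m m ℝ) = T - J := by rw [hT]; abel
    rw [hLd, Matrix.sub_mul, ← Matrix.mul_assoc, hTinv, Matrix.one_mul, ← Matrix.mul_assoc,
      hJTinv, Matrix.smul_mul, Matrix.mul_sub, Matrix.mul_one, hJJ, sub_self, smul_zero,
      sub_zero]
  rw [h1, h2]
  abel
end Jfacts


lemma resolvent_tendsto {m : Type*} [Fintype m] [DecidableEq m] {L J : Matrix m m ℝ}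
    (hres : ∀ δ : ℝ, 0 < δ → (L + J + δ • (1 : Matrix m m ℝ)).det ≠ 0 →
      (L + δ • (1 : Matrix m m ℝ))⁻¹
        = δ⁻¹ • J + (L + J + δ • (1 : Matrix m m ℝ))⁻¹ * (1 - J))
    (hS : (L + J).det ≠ 0) :
    Tendsto (fun δ : ℝ => δ • (L + δ • (1 : Matrix m m ℝ))⁻¹) (𝓝[>] 0) (𝓝 J) := by
  have hcont : Continuous fun δ : ℝ => (L + J + δ • (1 : Matrix m m ℝ)) := by
    exact continuous_const.add (continuous_id.smul continuous_const)
  have hdetcont : Continuous fun δ : ℝ => (L + J + δ • (1 : Matrix m m ℝ)).det :=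
    hcont.matrix_det
  have hat0 : (L + J + (0:ℝ) • (1 : Matrix m m ℝ)).det = (L + J).det := by
    rw [zero_smul, add_zero]
  have hev : ∀ᶠ δ in 𝓝[>] (0:ℝ), (L + J + δ • (1 : Matrix m m ℝ)).det ≠ 0 := by
    have := (hdetcont.continuousAt (x := 0)).eventually_ne (by rw [hat0]; exact hS)
    exact nhdsWithin_le_nhds this
  have hself : ∀ᶠ δ in 𝓝[>] (0:ℝ), 0 < δ := self_mem_nhdsWithin
  have heq : ∀ᶠ δ in 𝓝[>] (0:ℝ),
      δ • (L + δ • (1 : Matrix m m ℝ))⁻¹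
        = J + (δ * ((L + J + δ • (1 : Matrix m m ℝ)).det)⁻¹) •
            ((L + J + δ • (1 : Matrix m m ℝ)).adjugate * (1 - J)) := by
    filter_upwards [hev, hself] with δ hdet hδ
    rw [hres δ hδ hdet, smul_add, smul_smul, mul_inv_cancel₀ (ne_of_gt hδ), one_smul]
    congr 1
    rw [Matrix.inv_def, Ring.inverse_eq_inv', Matrix.smul_mul, smul_smul]
  rw [show (𝓝 J) = 𝓝 (J + ((0:ℝ) * ((L+J).det)⁻¹) • ((L+J).adjugate * (1 - J))) by
    rw [zero_mul, zero_smul, add_zero]]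
  apply Tendsto.congr' (EventuallyEq.symm heq)
  apply Tendsto.add tendsto_const_nhds
  apply Tendsto.smul
  · apply Tendsto.mul
    · exact tendsto_nhdsWithin_of_tendsto_nhds tendsto_id
    · apply Tendsto.inv₀
      · have : Tendsto (fun δ : ℝ => (L + J + δ • (1 : Matrix m m ℝ)).det) (𝓝[>] 0)
            (𝓝 ((L + J + (0:ℝ) • (1 : Matrix m m ℝ)).det)) :=
          (hdetcont.tendsto 0).mono_left nhdsWithin_le_nhds
        rwa [hat0] at this
      · exact hS
  · have : Tendsto (fun δ : ℝ => (L + J + δ • (1 : Matrix m m ℝ)).adjugate * (1 - J)) (𝓝 0)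
        (𝓝 ((L + J + (0:ℝ) • (1 : Matrix m m ℝ)).adjugate * (1 - J))) := by
      exact Continuous.tendsto (hcont.matrix_adjugate.matrix_mul continuous_const) 0
    have := this.mono_left (nhdsWithin_le_nhds (s := Set.Ioi (0:ℝ)))
    rwa [zero_smul, add_zero] at this


section Block
variable {n : ℕ} {L : Matrix (Fin n) (Fin n) ℝ} {δ : ℝ} {v : Fin n → ℝ}

lemma hubM_eq : hubL0 L + hubH δ v
    = Matrix.fromBlocks (L + δ • 1) (Matrix.of fun _ _ => -δ)
        (Matrix.of fun _ j => -(v j)) (Matrix.of fun _ _ => ∑ i, v i) := by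
  ext p q
  cases p <;> cases q <;>
    simp [hubL0, hubH, hubHI, hubHv, Matrix.fromBlocks, Matrix.one_apply, Matrix.smul_apply]

lemma hub_A_mulVec_ones (hL : IsLaplacian L) :
    (L + δ • (1 : Matrix (Fin n) (Fin n) ℝ)) *ᵥ (fun _ => (1:ℝ)) = fun _ => δ := by
  funext i
  simp only [Matrix.add_mulVec, Matrix.smul_mulVec, Matrix.one_mulVec, Pi.add_apply,
    Pi.smul_apply, smul_eq_mul, mul_one]
  have : (L *ᵥ fun _ => (1:ℝ)) i = ∑ j, L i j := by simp [Matrix.mulVec, dotProduct]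
  rw [this, hL.2 i, zero_add]

lemma hub_Ainv_ones (hL : IsLaplacian L) (hδ : 0 < δ) :
    (L + δ • (1 : Matrix (Fin n) (Fin n) ℝ))⁻¹ *ᵥ (fun _ => (1:ℝ)) = fun _ => δ⁻¹ := by
  set A := L + δ • (1 : Matrix (Fin n) (Fin n) ℝ) with hA
  have hdet : IsUnit A.det := isUnit_iff_ne_zero.mpr (lap_det_add_ne hL hδ)
  have h1 : A *ᵥ (fun _ => δ⁻¹) = fun _ => (1:ℝ) := by
    have h2 : (fun _ => δ⁻¹) = δ⁻¹ • (fun _ => (1:ℝ) : Fin n → ℝ) := by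
      funext i; simp
    rw [h2, Matrix.mulVec_smul, hub_A_mulVec_ones hL]
    funext i; simp [inv_mul_cancel₀ (ne_of_gt hδ)]
  calc A⁻¹ *ᵥ (fun _ => (1:ℝ)) = A⁻¹ *ᵥ (A *ᵥ (fun _ => δ⁻¹)) := by rw [h1]
    _ = (A⁻¹ * A) *ᵥ (fun _ => δ⁻¹) := by rw [Matrix.mulVec_mulVec]
    _ = fun _ => δ⁻¹ := by rw [Matrix.nonsing_inv_mul A hdet, Matrix.one_mulVec]

lemma hub_ker (hL : IsLaplacian L) (hδ : 0 < δ) :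
    LinearMap.ker (hubL0 L + hubH δ v).mulVecLin
      = Submodule.span ℝ {(fun _ => (1:ℝ) : Fin n ⊕ Unit → ℝ)} := by
  set A := L + δ • (1 : Matrix (Fin n) (Fin n) ℝ) with hA
  have hdet : IsUnit A.det := isUnit_iff_ne_zero.mpr (lap_det_add_ne hL hδ)
  apply le_antisymm
  · intro x hx
    simp only [LinearMap.mem_ker, Matrix.mulVecLin_apply] at hx
    have hxe : x = Sum.elim (x ∘ Sum.inl) (x ∘ Sum.inr) := by
      funext p; cases p <;> rfl
    rw [hubM_eq, hxe, Matrix.fromBlocks_mulVec] at hx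
    have htop : A *ᵥ (x ∘ Sum.inl) + (Matrix.of fun _ _ => -δ) *ᵥ (x ∘ Sum.inr) = 0 := by
      have := congrFun hx
      funext i
      have h := this (Sum.inl i)
      simpa using h
    have hBx : (Matrix.of fun _ _ => -δ : Matrix (Fin n) Unit ℝ) *ᵥ (x ∘ Sum.inr)
        = fun _ => -δ * x (Sum.inr ()) := by
      funext i
      simp [Matrix.mulVec, dotProduct]
    rw [hBx] at htop
    have hx1 : x ∘ Sum.inl = fun _ => x (Sum.inr ()) := by
      have hAx : A *ᵥ (x ∘ Sum.inl) = A *ᵥ (fun _ => x (Sum.inr ())) := by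
        have h2 : A *ᵥ (fun _ => x (Sum.inr ())) = fun _ => δ * x (Sum.inr ()) := by
          have h3 : (fun _ => x (Sum.inr ())) = x (Sum.inr ()) • (fun _ => (1:ℝ) : Fin n → ℝ) := by
            funext i; simp [mul_comm]
          rw [h3, Matrix.mulVec_smul, hub_A_mulVec_ones hL]
          funext i; simp [mul_comm]
        rw [h2]
        funext i
        have := congrFun htop i
        simp only [Pi.add_apply, Pi.zero_apply] at this
        linarith
      calc x ∘ Sum.inl = (A⁻¹ * A) *ᵥ (x ∘ Sum.inl) := by
            rw [Matrix.nonsing_inv_mul A hdet, Matrix.one_mulVec]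
        _ = A⁻¹ *ᵥ (A *ᵥ (x ∘ Sum.inl)) := by rw [Matrix.mulVec_mulVec]
        _ = A⁻¹ *ᵥ (A *ᵥ (fun _ => x (Sum.inr ()))) := by rw [hAx]
        _ = (A⁻¹ * A) *ᵥ (fun _ => x (Sum.inr ())) := by rw [Matrix.mulVec_mulVec]
        _ = fun _ => x (Sum.inr ()) := by rw [Matrix.nonsing_inv_mul A hdet, Matrix.one_mulVec]
    rw [Submodule.mem_span_singleton]
    refine ⟨x (Sum.inr ()), ?_⟩
    funext p
    cases p with
    | inl i =>
      have := congrFun hx1 i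
      simpa [mul_comm] using this.symm
    | inr u =>
      cases u
      simp
  · rw [Submodule.span_le, Set.singleton_subset_iff]
    simp only [SetLike.mem_coe, LinearMap.mem_ker, Matrix.mulVecLin_apply]
    have hone : (fun _ => (1:ℝ) : Fin n ⊕ Unit → ℝ)
        = Sum.elim (fun _ => (1:ℝ)) (fun _ => (1:ℝ)) := by
      funext p; cases p <;> rfl
    rw [hubM_eq, hone, Matrix.fromBlocks_mulVec]
    simp only [Sum.elim_comp_inl, Sum.elim_comp_inr]
    have h1 : A *ᵥ (fun _ => (1:ℝ)) + (Matrix.of fun _ _ => -δ : Matrix (Fin n) Unit ℝ) *ᵥ (fun _ => (1:ℝ)) = 0 := by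
      rw [hub_A_mulVec_ones hL]
      funext i
      simp [Matrix.mulVec, dotProduct]
    have h2 : (Matrix.of fun _ j => -(v j) : Matrix Unit (Fin n) ℝ) *ᵥ (fun _ => (1:ℝ))
        + (Matrix.of fun _ _ => ∑ i, v i : Matrix Unit Unit ℝ) *ᵥ (fun _ => (1:ℝ)) = 0 := by
      funext i
      simp [Matrix.mulVec, dotProduct, Finset.sum_neg_distrib]
    rw [h1, h2]
    funext p; cases p <;> rfl

lemma hub_vecMul (hL : IsLaplacian L) (hδ : 0 < δ) :
    (Sum.elim (v ᵥ* (L + δ • (1 : Matrix (Fin n) (Fin n) ℝ))⁻¹) (fun _ => (1:ℝ)))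
      ᵥ* (hubL0 L + hubH δ v) = 0 := by
  set A := L + δ • (1 : Matrix (Fin n) (Fin n) ℝ) with hA
  have hdet : IsUnit A.det := isUnit_iff_ne_zero.mpr (lap_det_add_ne hL hδ)
  rw [hubM_eq, Matrix.vecMul_fromBlocks]
  simp only [Sum.elim_comp_inl, Sum.elim_comp_inr]
  have h1 : (v ᵥ* A⁻¹) ᵥ* A + (fun _ => (1:ℝ)) ᵥ* (Matrix.of fun _ j => -(v j) : Matrix Unit (Fin n) ℝ) = 0 := by
    rw [Matrix.vecMul_vecMul, Matrix.nonsing_inv_mul A hdet, Matrix.vecMul_one]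
    funext j
    simp [Matrix.vecMul, dotProduct]
  have hdotone : (v ᵥ* A⁻¹) ⬝ᵥ (fun _ => (1:ℝ)) = (∑ i, v i) / δ := by
    rw [← Matrix.dotProduct_mulVec, hub_Ainv_ones hL hδ]
    simp [dotProduct, div_eq_mul_inv, Finset.sum_mul]
  have h2 : (v ᵥ* A⁻¹) ᵥ* (Matrix.of fun _ _ => -δ : Matrix (Fin n) Unit ℝ)
      + (fun _ => (1:ℝ)) ᵥ* (Matrix.of fun _ _ => ∑ i, v i : Matrix Unit Unit ℝ) = 0 := by
    funext j
    have hvm : ((v ᵥ* A⁻¹) ᵥ* (Matrix.of fun _ _ => -δ : Matrix (Fin n) Unit ℝ)) j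
        = ∑ i, (v ᵥ* A⁻¹) i * (-δ) := by
      simp [Matrix.vecMul, dotProduct]
    rw [Pi.add_apply, hvm]
    have : ∑ i, (v ᵥ* A⁻¹) i * (-δ) = -δ * ((v ᵥ* A⁻¹) ⬝ᵥ (fun _ => (1:ℝ))) := by
      simp [dotProduct, Finset.sum_mul, Finset.mul_sum, mul_comm]
    rw [this, hdotone]
    have : ((fun _ => (1:ℝ)) ᵥ* (Matrix.of fun _ _ => ∑ i, v i : Matrix Unit Unit ℝ)) j
        = ∑ i, v i := by
      simp [Matrix.vecMul, dotProduct]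
    rw [this]
    simp only [Pi.zero_apply]
    field_simp
    ring
  rw [h1, h2]
  funext p; cases p <;> rfl

lemma hub_dot (hL : IsLaplacian L) (hδ : 0 < δ) :
    (Sum.elim (v ᵥ* (L + δ • (1 : Matrix (Fin n) (Fin n) ℝ))⁻¹) (fun _ => (1:ℝ)))
      ⬝ᵥ (fun _ => (1:ℝ) : Fin n ⊕ Unit → ℝ) = (∑ i, v i) / δ + 1 := by
  set A := L + δ • (1 : Matrix (Fin n) (Fin n) ℝ) with hA
  have hdotone : (v ᵥ* A⁻¹) ⬝ᵥ (fun _ => (1:ℝ)) = (∑ i, v i) / δ := by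
    rw [← Matrix.dotProduct_mulVec, hub_Ainv_ones hL hδ]
    simp [dotProduct, div_eq_mul_inv, Finset.sum_mul]
  rw [dotProduct, Fintype.sum_sum_type]
  simp only [Sum.elim_inl, Sum.elim_inr, mul_one]
  rw [show ∑ i : Fin n, (v ᵥ* A⁻¹) i = (v ᵥ* A⁻¹) ⬝ᵥ (fun _ => (1:ℝ)) by
    simp [dotProduct]]
  rw [hdotone]
  simp
end Block

lemma eigenprojection_unique {m : Type*} [Fintype m] [DecidableEq m]
    {A P Q : Matrix m m ℝ} (hP : IsEigenprojection A P) (hQ : IsEigenprojection A Q) :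
    P = Q :=
  idem_unique hP.1 hQ.1 (hP.2.1.trans hQ.2.1.symm) (hP.2.2.trans hQ.2.2.symm)

/-- A hub subordinate to the agents: if `δ/s(δ) → 0` and `v(δ)/s(δ) → ṽ` as
`δ → 0⁺`, then the eigenprojection of `L₀ + H_{δ,v(δ)}` converges to the
rank-one matrix `1′·[ṽᵀJ̄  0]`, where `J̄ = L^⊢`. -/
theorem eigenprojection_subordinate_hub {n : ℕ} (L J : Matrix (Fin n) (Fin n) ℝ)
    (hL : IsLaplacian L) (hJ : IsEigenprojection L J)
    (v : ℝ → Fin n → ℝ) (hv : ∀ δ : ℝ, 0 < δ → ∀ i, 0 ≤ v δ i)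
    (hs : ∀ δ : ℝ, 0 < δ → 0 < ∑ i, v δ i)
    (hds : Tendsto (fun δ : ℝ => δ / ∑ i, v δ i) (𝓝[>] 0) (𝓝 0))
    (vt : Fin n → ℝ)
    (hvt : Tendsto (fun δ : ℝ => (∑ i, v δ i)⁻¹ • v δ) (𝓝[>] 0) (𝓝 vt))
    (Q : ℝ → Matrix (Fin n ⊕ Unit) (Fin n ⊕ Unit) ℝ)
    (hQ : ∀ δ : ℝ, 0 < δ → IsEigenprojection (hubL0 L + hubH δ (v δ)) (Q δ)) :
    Tendsto Q (𝓝[>] 0)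
      (𝓝 (Matrix.vecMulVec (fun _ => (1 : ℝ))
        (Sum.elim (fun j => (vt ᵥ* J) j) (fun _ => 0)))) := by
  classical
  rcases Nat.eq_zero_or_pos n with hn0 | hnpos
  · subst hn0
    have := hs 1 one_pos
    simp at this
  haveI : Nonempty (Fin n) := ⟨⟨0, hnpos⟩⟩
  -- L-side facts
  have hLind : matIndex L = 1 := lap_matIndex hL
  obtain ⟨hJJ, hJr, hJk⟩ := hJ
  rw [hLind, pow_one] at hJr hJk
  obtain ⟨hLJ, hJL, hSdet⟩ := Jfacts hJJ hJr hJk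
  have hG : Tendsto (fun δ : ℝ => δ • (L + δ • (1 : Matrix (Fin n) (Fin n) ℝ))⁻¹)
      (𝓝[>] 0) (𝓝 J) :=
    resolvent_tendsto (fun δ hδ hTdet => resolvent_formula hLJ hJL hJJ hδ hTdet) hSdet
  have hGij : ∀ i j, Tendsto
      (fun δ : ℝ => (δ • (L + δ • (1 : Matrix (Fin n) (Fin n) ℝ))⁻¹) i j)
      (𝓝[>] 0) (𝓝 (J i j)) :=
    fun i j => tendsto_pi_nhds.mp (tendsto_pi_nhds.mp hG i) j
  have hvti : ∀ i, Tendsto (fun δ : ℝ => (∑ k, v δ k)⁻¹ * v δ i) (𝓝[>] 0) (𝓝 (vt i)) := by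
    intro i
    have := tendsto_pi_nhds.mp hvt i
    simpa [Pi.smul_apply, smul_eq_mul] using this
  -- Q δ equals the explicit projection
  have hQeq : ∀ δ : ℝ, 0 < δ → Q δ = ((∑ i, v δ i) / δ + 1)⁻¹ •
      Matrix.vecMulVec (fun _ => (1:ℝ))
        (Sum.elim (v δ ᵥ* (L + δ • (1 : Matrix (Fin n) (Fin n) ℝ))⁻¹) (fun _ => (1:ℝ))) := by
    intro δ hδ
    have hone_ne : (fun _ => (1:ℝ) : Fin n ⊕ Unit → ℝ) ≠ 0 := by
      intro h
      exact one_ne_zero (congrFun h (Sum.inr ()))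
    have hdot := hub_dot (L := L) (v := v δ) hL hδ
    have hsδ := hs δ hδ
    have hdot_ne : (Sum.elim (v δ ᵥ* (L + δ • (1 : Matrix (Fin n) (Fin n) ℝ))⁻¹)
        (fun _ => (1:ℝ))) ⬝ᵥ (fun _ => (1:ℝ) : Fin n ⊕ Unit → ℝ) ≠ 0 := by
      rw [hdot]
      positivity
    have hEP := eigenprojection_of_rank_one_ker (hub_ker hL hδ) hone_ne
      (hub_vecMul hL hδ) hdot_ne
    rw [hdot] at hEP
    exact eigenprojection_unique (hQ δ hδ) hEP
  -- scalar limits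
  have hsa : Tendsto (fun δ : ℝ => (1 + δ / ∑ i, v δ i)⁻¹) (𝓝[>] 0) (𝓝 1) := by
    have h1 : Tendsto (fun δ : ℝ => 1 + δ / ∑ i, v δ i) (𝓝[>] 0) (𝓝 (1 + 0)) :=
      tendsto_const_nhds.add hds
    rw [add_zero] at h1
    have := h1.inv₀ one_ne_zero
    simpa using this
  have ha0 : Tendsto (fun δ : ℝ => ((∑ i, v δ i) / δ + 1)⁻¹) (𝓝[>] 0) (𝓝 0) := by
    have hmul : Tendsto (fun δ : ℝ => (δ / ∑ i, v δ i) * (1 + δ / ∑ i, v δ i)⁻¹)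
        (𝓝[>] 0) (𝓝 (0 * 1)) := hds.mul hsa
    rw [zero_mul] at hmul
    apply Tendsto.congr' _ hmul
    filter_upwards [self_mem_nhdsWithin] with δ hδ
    have hδ' : (0:ℝ) < δ := hδ
    have hsδ := hs δ hδ'
    field_simp
  -- conclude entrywise
  apply Tendsto.congr' (f₁ := fun δ : ℝ => ((∑ i, v δ i) / δ + 1)⁻¹ •
      Matrix.vecMulVec (fun _ => (1:ℝ))
        (Sum.elim (v δ ᵥ* (L + δ • (1 : Matrix (Fin n) (Fin n) ℝ))⁻¹) (fun _ => (1:ℝ))))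
  · filter_upwards [self_mem_nhdsWithin] with δ hδ
    exact (hQeq δ hδ).symm
  refine tendsto_pi_nhds.mpr ?_
  intro p
  rw [tendsto_pi_nhds]
  intro q
  have hentry : ∀ δ : ℝ, (((∑ i, v δ i) / δ + 1)⁻¹ •
      Matrix.vecMulVec (fun _ => (1:ℝ))
        (Sum.elim (v δ ᵥ* (L + δ • (1 : Matrix (Fin n) (Fin n) ℝ))⁻¹) (fun _ => (1:ℝ)))) p q
      = ((∑ i, v δ i) / δ + 1)⁻¹ *
        (Sum.elim (v δ ᵥ* (L + δ • (1 : Matrix (Fin n) (Fin n) ℝ))⁻¹) (fun _ => (1:ℝ))) q := by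
    intro δ
    simp [Matrix.vecMulVec_apply]
  simp only [hentry]
  rcases q with j | u
  · -- main entries
    simp only [Sum.elim_inl, Matrix.vecMulVec_apply, one_mul]
    have key : Tendsto (fun δ : ℝ => (1 + δ / ∑ i, v δ i)⁻¹ *
        ∑ i, ((∑ k, v δ k)⁻¹ * v δ i) *
          ((δ • (L + δ • (1 : Matrix (Fin n) (Fin n) ℝ))⁻¹) i j))
        (𝓝[>] 0) (𝓝 (1 * ∑ i, vt i * J i j)) := by
      apply hsa.mul
      apply tendsto_finset_sum
      intro i _
      exact (hvti i).mul (hGij i j)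
    rw [one_mul] at key
    have htarget : (vt ᵥ* J) j = ∑ i, vt i * J i j := by
      simp [Matrix.vecMul, dotProduct]
    rw [htarget]
    apply Tendsto.congr' _ key
    filter_upwards [self_mem_nhdsWithin] with δ hδ
    have hδ' : (0:ℝ) < δ := hδ
    have hsδ := hs δ hδ'
    have hsum : ∑ i, ((∑ k, v δ k)⁻¹ * v δ i) *
          ((δ • (L + δ • (1 : Matrix (Fin n) (Fin n) ℝ))⁻¹) i j)
        = (∑ k, v δ k)⁻¹ * δ *
          ∑ i, v δ i * (L + δ • (1 : Matrix (Fin n) (Fin n) ℝ))⁻¹ i j := by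
      rw [Finset.mul_sum]
      apply Finset.sum_congr rfl
      intro i _
      simp only [Matrix.smul_apply, smul_eq_mul]
      ring
    have hw : (v δ ᵥ* (L + δ • (1 : Matrix (Fin n) (Fin n) ℝ))⁻¹) j
        = ∑ i, v δ i * (L + δ • (1 : Matrix (Fin n) (Fin n) ℝ))⁻¹ i j := by
      simp [Matrix.vecMul, dotProduct]
    rw [hsum, ← hw]
    set W := (v δ ᵥ* (L + δ • (1 : Matrix (Fin n) (Fin n) ℝ))⁻¹) j
    set S := ∑ k, v δ k
    have hS0 : S ≠ 0 := ne_of_gt hsδ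
    have hδ0 : δ ≠ 0 := ne_of_gt hδ'
    have hSδ : S + δ ≠ 0 := by positivity
    have hcoef : ((∑ i, v δ i) / δ + 1)⁻¹ = (1 + δ / S)⁻¹ * (S⁻¹ * δ) := by
      rw [show (∑ i, v δ i) = S from rfl]
      have h1 : S / δ + 1 = (S + δ) / δ := by field_simp
      have h2 : 1 + δ / S = (S + δ) / S := by field_simp
      rw [h1, h2, inv_div, inv_div]
      field_simp
    rw [hcoef]
    ring
  · -- last entry
    simp only [Sum.elim_inr, Matrix.vecMulVec_apply, one_mul, mul_one]
    exact ha0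
end

section
/- Let P be an n×n row-stochastic matrix, let v ∈ ℝⁿ be a distribution vector, let δ ∈ (0,1], and set γ = δ⁻¹ − 1. Define the (n+1)×(n+1) matrix Q_{δ,v} with blocks: top-left (1−δ)P, top-right δ·1 (a column), bottom-left vᵀ (a row), bottom-right 0. Then: (1) the eigenprojection of I′ − Q_{δ,v} equals 1′·(1/(1+δ))·[vᵀ(I + γ(I−P))⁻¹ δ] (the outer product of the all-ones column vector 1′ of length n+1 with the row vector whose first n entries are (1/(1+δ))·vᵀ(I + γ(I−P))⁻¹ and whose last entry is δ/(1+δ)); and (2) as δ → 0⁺, the eigenprojection of I′ − Q_{δ,v} converges to 1′·[vᵀ(I−P)^⊢ 0]. -/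
open Matrix Filter Topology

/-- A row-stochastic matrix: nonnegative entries and all row sums equal to 1. -/
def IsRowStochastic {m : Type*} [Fintype m] (P : Matrix m m ℝ) : Prop :=
  (∀ i j, 0 ≤ P i j) ∧ ∀ i, ∑ j, P i j = 1

/-- The regularized extension `Q_{δ,v}` of a stochastic matrix `P`:
top-left block `(1-δ)P`, top-right column `δ·1`, bottom-left row `vᵀ`,
bottom-right `0`. -/
def regQ {n : ℕ} (P : Matrix (Fin n) (Fin n) ℝ) (δ : ℝ) (v : Fin n → ℝ) :
    Matrix (Fin n ⊕ Unit) (Fin n ⊕ Unit) ℝ :=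
  Matrix.fromBlocks ((1 - δ) • P) (Matrix.of fun _ _ => δ)
    (Matrix.of fun _ j => v j) 0

set_option linter.unusedSectionVars false
set_option maxHeartbeats 1000000

namespace DG

variable {m : Type*} [Fintype m] [DecidableEq m]

lemma dot_le (w x : m → ℝ) (s : ℝ) (hw : ∀ i, 0 ≤ w i) (hsum : ∑ i, w i = 1)
    (hx : ∀ i, x i ≤ s) : ∑ i, w i * x i ≤ s := by
  calc ∑ i, w i * x i ≤ ∑ i, w i * s :=
        Finset.sum_le_sum fun i _ => mul_le_mul_of_nonneg_left (hx i) (hw i)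
    _ = s := by rw [← Finset.sum_mul, hsum, one_mul]

lemma dot_ge (w x : m → ℝ) (s : ℝ) (hw : ∀ i, 0 ≤ w i) (hsum : ∑ i, w i = 1)
    (hx : ∀ i, s ≤ x i) : s ≤ ∑ i, w i * x i := by
  calc s = ∑ i, w i * s := by rw [← Finset.sum_mul, hsum, one_mul]
    _ ≤ ∑ i, w i * x i :=
        Finset.sum_le_sum fun i _ => mul_le_mul_of_nonneg_left (hx i) (hw i)

lemma vecMul_smul_mat {n' : Type*} [Fintype n'] (x : n' → ℝ) (c : ℝ)
    (A : Matrix n' m ℝ) : x ᵥ* (c • A) = c • (x ᵥ* A) := by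
  ext j
  simp [Matrix.vecMul, dotProduct, Matrix.smul_apply, Finset.mul_sum,
    mul_left_comm]

lemma mulVec_apply' (A : Matrix m m ℝ) (x : m → ℝ) (i : m) :
    (A *ᵥ x) i = ∑ j, A i j * x j := rfl

lemma vecMul_apply' (A : Matrix m m ℝ) (x : m → ℝ) (j : m) :
    (x ᵥ* A) j = ∑ i, x i * A i j := rfl

lemma isUnit_one_sub_smul {P : Matrix m m ℝ} (hP : IsRowStochastic P) {c : ℝ}
    (hc0 : 0 ≤ c) (hc1 : c < 1) : IsUnit (1 - c • P) := by
  rw [← Matrix.mulVec_injective_iff_isUnit]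
  have hker : ∀ x : m → ℝ, (1 - c • P) *ᵥ x = 0 → x = 0 := by
    intro x hx
    have hx' : ∀ i, x i = c * ∑ j, P i j * x j := by
      intro i
      have h := congrFun hx i
      rw [Matrix.sub_mulVec, Matrix.one_mulVec, smul_mulVec] at h
      have h' : x i - c * (P *ᵥ x) i = 0 := h
      rw [mulVec_apply'] at h'
      linarith
    funext i
    obtain ⟨imax, _, hmax⟩ := Finset.exists_max_image Finset.univ x ⟨i, Finset.mem_univ i⟩
    obtain ⟨imin, _, hmin⟩ := Finset.exists_min_image Finset.univ x ⟨i, Finset.mem_univ i⟩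
    have h1 : x imax ≤ c * x imax := by
      have := dot_le (P imax) x (x imax) (hP.1 imax) (hP.2 imax)
        (fun j => hmax j (Finset.mem_univ j))
      calc x imax = c * ∑ j, P imax j * x j := hx' imax
        _ ≤ c * x imax := mul_le_mul_of_nonneg_left this hc0
    have h2 : c * x imin ≤ x imin := by
      have := dot_ge (P imin) x (x imin) (hP.1 imin) (hP.2 imin)
        (fun j => hmin j (Finset.mem_univ j))
      calc c * x imin ≤ c * ∑ j, P imin j * x j := mul_le_mul_of_nonneg_left this hc0
        _ = x imin := (hx' imin).symm
    have hmx : x imax ≤ 0 := by nlinarith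
    have hmn : 0 ≤ x imin := by nlinarith
    have := hmax i (Finset.mem_univ i)
    have := hmin i (Finset.mem_univ i)
    have : x i = 0 := by linarith
    simpa using this
  intro a b hab
  have : (1 - c • P) *ᵥ (a - b) = 0 := by
    rw [Matrix.mulVec_sub, hab, sub_self]
  have := hker _ this
  exact sub_eq_zero.mp this

lemma matIndex_eq_one (A : Matrix m m ℝ)
    (h2 : ∀ x : m → ℝ, A *ᵥ (A *ᵥ x) = 0 → A *ᵥ x = 0)
    (hx : ∃ x : m → ℝ, x ≠ 0 ∧ A *ᵥ x = 0) : matIndex A = 1 := by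
  have hker : LinearMap.ker (A ^ 2).mulVecLin = LinearMap.ker (A ^ 1).mulVecLin := by
    ext x
    simp only [LinearMap.mem_ker, Matrix.mulVecLin_apply, pow_one, pow_two]
    constructor
    · intro h
      exact h2 x (by rwa [Matrix.mulVec_mulVec])
    · intro h
      rw [← Matrix.mulVec_mulVec, h, Matrix.mulVec_zero]
  have h1mem : 1 ∈ {k : ℕ | (A ^ (k + 1)).rank = (A ^ k).rank} := by
    have e1 := LinearMap.finrank_range_add_finrank_ker (A ^ 2).mulVecLin
    have e2 := LinearMap.finrank_range_add_finrank_ker (A ^ 1).mulVecLin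
    rw [hker] at e1
    show (A ^ 2).rank = (A ^ 1).rank
    unfold Matrix.rank
    omega
  have h0 : (A ^ (0 + 1)).rank ≠ (A ^ 0).rank := by
    obtain ⟨x, hx0, hAx⟩ := hx
    have hmem : x ∈ LinearMap.ker (A ^ 1).mulVecLin := by
      simp only [LinearMap.mem_ker, Matrix.mulVecLin_apply, pow_one]
      exact hAx
    have hkpos : Module.finrank ℝ (LinearMap.ker (A ^ 1).mulVecLin) ≠ 0 := by
      intro h
      rw [Submodule.finrank_eq_zero] at h
      rw [h, Submodule.mem_bot] at hmem
      exact hx0 hmem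
    have e2 := LinearMap.finrank_range_add_finrank_ker (A ^ 1).mulVecLin
    have hfd : Module.finrank ℝ (m → ℝ) = Fintype.card m := Module.finrank_pi ℝ
    rw [pow_zero, Matrix.rank_one, zero_add]
    show (A ^ 1).rank ≠ _
    unfold Matrix.rank
    omega
  have hle : sInf {k : ℕ | (A ^ (k + 1)).rank = (A ^ k).rank} ≤ 1 := Nat.sInf_le h1mem
  have hne : sInf {k : ℕ | (A ^ (k + 1)).rank = (A ^ k).rank} ≠ 0 := by
    intro h
    have hmem := Nat.sInf_mem (⟨1, h1mem⟩ :
      Set.Nonempty {k : ℕ | (A ^ (k + 1)).rank = (A ^ k).rank})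
    rw [h] at hmem
    exact h0 hmem
  unfold matIndex
  omega

lemma isEigenprojection_of (A M : Matrix m m ℝ) (hM2 : M * M = M)
    (hAM : A * M = 0) (hMA : M * A = 0) (hMne : M ≠ 0)
    (hU : IsUnit (A + M).det) : IsEigenprojection A M := by
  set S := (A + M)⁻¹ with hS
  have h1 : (A + M) * S = 1 := Matrix.mul_nonsing_inv _ hU
  have h2 : S * (A + M) = 1 := Matrix.nonsing_inv_mul _ hU
  have hSM : S * M = M := by
    have h : (A + M) * M = M := by rw [add_mul, hAM, zero_add, hM2]
    calc S * M = S * ((A + M) * M) := by rw [h]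
      _ = S * (A + M) * M := by rw [mul_assoc]
      _ = M := by rw [h2, one_mul]
  have hc : (A + M) * A = A * (A + M) := by rw [add_mul, mul_add, hAM, hMA]
  have hSA : A * S = S * A := by
    have l1 : S * ((A + M) * A) * S = A * S := by
      rw [← mul_assoc, h2, one_mul]
    have l2 : S * (A * (A + M)) * S = S * A := by
      rw [mul_assoc, mul_assoc, h1, mul_one]
    have e : S * ((A + M) * A) * S = S * (A * (A + M)) * S := by rw [hc]
    exact (l1.symm.trans e).trans l2
  have key1 : ∀ x : m → ℝ, A *ᵥ x = 0 → M *ᵥ x = x := by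
    intro x hx
    have h : (S * (A + M)) *ᵥ x = x := by rw [h2, Matrix.one_mulVec]
    rw [← Matrix.mulVec_mulVec, Matrix.add_mulVec, hx, zero_add,
      Matrix.mulVec_mulVec, hSM] at h
    exact h
  have key2 : ∀ x : m → ℝ, M *ᵥ x = 0 → A *ᵥ (S *ᵥ x) = x := by
    intro x hx
    have h : (S * (A + M)) *ᵥ x = x := by rw [h2, Matrix.one_mulVec]
    rw [← Matrix.mulVec_mulVec, Matrix.add_mulVec, hx, add_zero,
      Matrix.mulVec_mulVec, ← hSA, ← Matrix.mulVec_mulVec] at h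
    exact h
  have h2' : ∀ x : m → ℝ, A *ᵥ (A *ᵥ x) = 0 → A *ᵥ x = 0 := by
    intro x hx
    have hMy : M *ᵥ (A *ᵥ x) = 0 := by
      rw [Matrix.mulVec_mulVec, hMA, Matrix.zero_mulVec]
    have := key1 (A *ᵥ x) hx
    rw [hMy] at this
    exact this.symm
  have hxe : ∃ x : m → ℝ, x ≠ 0 ∧ A *ᵥ x = 0 := by
    obtain ⟨i, j, hij⟩ : ∃ i j, M i j ≠ 0 := by
      by_contra h
      push_neg at h
      exact hMne (Matrix.ext fun i j => by rw [h i j, Matrix.zero_apply])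
    refine ⟨M *ᵥ Pi.single j 1, ?_, ?_⟩
    · intro h
      have := congrFun h i
      rw [Matrix.mulVec_single] at this
      simp at this
      exact hij this
    · rw [Matrix.mulVec_mulVec, hAM, Matrix.zero_mulVec]
  have hk : matIndex A = 1 := matIndex_eq_one A h2' hxe
  refine ⟨hM2, ?_, ?_⟩
  · rw [hk, pow_one]
    ext x
    simp only [LinearMap.mem_range, LinearMap.mem_ker, Matrix.mulVecLin_apply]
    constructor
    · rintro ⟨y, rfl⟩
      rw [Matrix.mulVec_mulVec, hAM, Matrix.zero_mulVec]
    · intro h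
      exact ⟨x, key1 x h⟩
  · rw [hk, pow_one]
    ext x
    simp only [LinearMap.mem_range, LinearMap.mem_ker, Matrix.mulVecLin_apply]
    constructor
    · intro h
      exact ⟨S *ᵥ x, key2 x h⟩
    · rintro ⟨y, rfl⟩
      rw [Matrix.mulVec_mulVec, hMA, Matrix.zero_mulVec]

lemma isRowStochastic_one : IsRowStochastic (1 : Matrix m m ℝ) := by
  constructor
  · intro i j
    rw [Matrix.one_apply]
    split <;> norm_num
  · intro i
    simp [Matrix.one_apply]

lemma rs_mul {A B : Matrix m m ℝ} (hA : IsRowStochastic A)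
    (hB : IsRowStochastic B) : IsRowStochastic (A * B) := by
  constructor
  · intro i j
    rw [Matrix.mul_apply]
    exact Finset.sum_nonneg fun k _ => mul_nonneg (hA.1 i k) (hB.1 k j)
  · intro i
    simp only [Matrix.mul_apply]
    rw [Finset.sum_comm]
    simp_rw [← Finset.mul_sum, hB.2, mul_one]
    exact hA.2 i

lemma isRowStochastic_pow {P : Matrix m m ℝ} (hP : IsRowStochastic P) (k : ℕ) :
    IsRowStochastic (P ^ k) := by
  induction k with
  | zero => simpa [pow_zero] using (isRowStochastic_one (m := m))
  | succ k ih => rw [pow_succ]; exact rs_mul ih hP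

lemma kerL2 {P : Matrix m m ℝ} (hP : IsRowStochastic P) :
    ∀ x : m → ℝ, (1 - P) *ᵥ ((1 - P) *ᵥ x) = 0 → (1 - P) *ᵥ x = 0 := by
  intro x h
  set w := (1 - P) *ᵥ x with hwdef
  have hw' : w = x - P *ᵥ x := by
    rw [hwdef, Matrix.sub_mulVec, Matrix.one_mulVec]
  have hPx : P *ᵥ x = x - w := by rw [hw']; abel
  have hPw : P *ᵥ w = w := by
    have h' : (1 - P) *ᵥ w = 0 := h
    rw [Matrix.sub_mulVec, Matrix.one_mulVec, sub_eq_zero] at h'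
    exact h'.symm
  have hiter : ∀ k : ℕ, (P ^ k) *ᵥ x = x - (k : ℝ) • w := by
    intro k
    induction k with
    | zero => simp
    | succ k ih =>
      rw [pow_succ', ← Matrix.mulVec_mulVec, ih, Matrix.mulVec_sub,
        Matrix.mulVec_smul, hPw, hPx]
      push_cast
      ext i
      simp
      ring
  have hbnd : ∀ (k : ℕ) (i : m), |x i - (k : ℝ) * w i| ≤ ‖x‖ := by
    intro k i
    have hs := isRowStochastic_pow hP k
    have he : (P ^ k *ᵥ x) i = x i - (k : ℝ) * w i := by
      rw [hiter k]; simp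
    rw [← he]
    rw [mulVec_apply']
    have hub : ∀ j, x j ≤ ‖x‖ := fun j =>
      le_of_abs_le (by simpa [Real.norm_eq_abs] using norm_le_pi_norm x j)
    have hlb : ∀ j, -‖x‖ ≤ x j := fun j => by
      have := abs_le.mp (by simpa [Real.norm_eq_abs] using norm_le_pi_norm x j)
      exact this.1
    rw [abs_le]
    constructor
    · exact dot_ge (fun j => (P ^ k) i j) x (-‖x‖) (fun j => hs.1 i j) (hs.2 i) hlb
    · exact dot_le (fun j => (P ^ k) i j) x ‖x‖ (fun j => hs.1 i j) (hs.2 i) hub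
  funext i
  simp only [Pi.zero_apply]
  by_contra hwi
  obtain ⟨k, hk⟩ := exists_nat_gt ((‖x‖ + |x i|) / |w i|)
  have habs : 0 < |w i| := abs_pos.mpr hwi
  have h1 : ‖x‖ + |x i| < (k : ℝ) * |w i| := (div_lt_iff₀ habs).mp hk
  have h2 := hbnd k i
  have h3 : (k : ℝ) * |w i| - |x i| ≤ |x i - (k : ℝ) * w i| := by
    have h4 := abs_sub_abs_le_abs_sub ((k : ℝ) * w i) (x i)
    rw [abs_mul, Nat.abs_cast] at h4
    calc (k : ℝ) * |w i| - |x i| ≤ |(k : ℝ) * w i - x i| := h4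
      _ = |x i - (k : ℝ) * w i| := abs_sub_comm _ _
  linarith

end DG

namespace DG2
open DG

variable {m : Type*} [Fintype m] [DecidableEq m]
set_option maxHeartbeats 1000000

lemma isUnit_of_ker {A : Matrix m m ℝ} (h : ∀ x : m → ℝ, A *ᵥ x = 0 → x = 0) :
    IsUnit A := by
  rw [← Matrix.mulVec_injective_iff_isUnit]
  intro a b hab
  have : A *ᵥ (a - b) = 0 := by rw [Matrix.mulVec_sub, hab, sub_self]
  exact sub_eq_zero.mp (h _ this)

lemma eq_zero_of_mulVec_eq_zero {A : Matrix m m ℝ} (h : ∀ x, A *ᵥ x = 0) :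
    A = 0 := by
  ext i j
  have := congrFun (h (Pi.single j 1)) i
  rw [Matrix.mulVec_single] at this
  simpa using this

lemma matIndex_one_sub_eq_one [Nonempty m] {P : Matrix m m ℝ}
    (hP : IsRowStochastic P) : matIndex (1 - P) = 1 := by
  apply matIndex_eq_one _ (kerL2 hP)
  refine ⟨fun _ => 1, ?_, ?_⟩
  · intro h
    exact one_ne_zero (congrFun h (Classical.arbitrary m))
  · rw [Matrix.sub_mulVec, Matrix.one_mulVec, sub_eq_zero]
    funext i
    rw [mulVec_apply']
    simp only [mul_one]
    exact (hP.2 i).symm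

lemma tendsto_reg_inv [Nonempty m] {P J : Matrix m m ℝ} (hP : IsRowStochastic P)
    (hJ : IsEigenprojection (1 - P) J) :
    ∃ N : ℝ → Matrix m m ℝ,
      (∀ ε ∈ Set.Ioc (0:ℝ) 1, (1 + (ε⁻¹ - 1) • (1 - P))⁻¹ = N ε) ∧
      Tendsto N (𝓝 0) (𝓝 J) := by
  have hind := matIndex_one_sub_eq_one hP
  obtain ⟨hJ2, hJr, hJk⟩ := hJ
  rw [hind, pow_one] at hJr hJk
  have hLJ : (1 - P) * J = 0 := by
    apply eq_zero_of_mulVec_eq_zero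
    intro x
    rw [← Matrix.mulVec_mulVec]
    have hx : J *ᵥ x ∈ LinearMap.range J.mulVecLin :=
      ⟨x, by simp [Matrix.mulVecLin_apply]⟩
    rw [hJr] at hx
    exact LinearMap.mem_ker.mp hx
  have hJL : J * (1 - P) = 0 := by
    apply eq_zero_of_mulVec_eq_zero
    intro x
    rw [← Matrix.mulVec_mulVec]
    have hx : (1 - P) *ᵥ x ∈ LinearMap.range (1 - P).mulVecLin :=
      ⟨x, by simp [Matrix.mulVecLin_apply, Matrix.sub_mulVec]⟩
    rw [← hJk] at hx
    simpa [Matrix.mulVecLin_apply] using hx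
  set K := (1 - P) + J with hK
  have hKdet : IsUnit K.det := by
    rw [← Matrix.isUnit_iff_isUnit_det]
    apply isUnit_of_ker
    intro x hx
    rw [hK, Matrix.add_mulVec] at hx
    have hJx : J *ᵥ x = 0 := by
      have h := congrArg (fun y => J *ᵥ y) hx
      simp only [Matrix.mulVec_add, Matrix.mulVec_mulVec, Matrix.mulVec_zero] at h
      rw [hJL, hJ2, Matrix.zero_mulVec, zero_add] at h
      exact h
    have hLx : (1 - P) *ᵥ x = 0 := by rwa [hJx, add_zero] at hx
    have hxr : x ∈ LinearMap.range J.mulVecLin := by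
      rw [hJr]
      exact LinearMap.mem_ker.mpr hLx
    obtain ⟨y, hy⟩ := hxr
    have hy' : J *ᵥ y = x := hy
    have : J *ᵥ x = x := by
      rw [← hy', Matrix.mulVec_mulVec, hJ2]
    rw [hJx] at this
    exact this.symm
  have hKne : K.det ≠ 0 := hKdet.ne_zero
  have hJK : J * K = J := by rw [hK, mul_add, hJL, zero_add, hJ2]
  have hJKinv : J * K⁻¹ = J := by
    calc J * K⁻¹ = J * K * K⁻¹ := by rw [hJK]
      _ = J * (K * K⁻¹) := mul_assoc _ _ _
      _ = J := by rw [Matrix.mul_nonsing_inv _ hKdet, mul_one]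
  set Hf : ℝ → Matrix m m ℝ := fun ε => (1 - (1 - ε) • P) + J with hHf
  have hH0 : Hf 0 = K := by
    rw [hHf, hK]
    simp
  refine ⟨fun ε => (ε • 1 + J) * ((Hf ε).det⁻¹ • (Hf ε).adjugate), ?_, ?_⟩
  · intro ε hε
    obtain ⟨hε0, hε1⟩ := hε
    have hεne : ε ≠ 0 := ne_of_gt hε0
    set B := 1 + (ε⁻¹ - 1) • (1 - P) with hB
    have hCB : ε • B = 1 - (1 - ε) • P := by
      rw [hB]
      ext i j
      simp only [Matrix.smul_apply, Matrix.add_apply, Matrix.sub_apply,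
        Matrix.one_apply]
      split_ifs <;> simp only [smul_eq_mul] <;> field_simp <;> ring
    have hCunit : IsUnit (1 - (1 - ε) • P) :=
      isUnit_one_sub_smul hP (by linarith) (by linarith)
    have hCdet : IsUnit (1 - (1 - ε) • P).det :=
      (Matrix.isUnit_iff_isUnit_det _).mp hCunit
    have hBdet : IsUnit B.det := by
      rw [isUnit_iff_ne_zero] at hCdet ⊢
      intro h
      rw [← hCB, Matrix.det_smul, h, mul_zero] at hCdet
      exact hCdet rfl
    have hBJ : B * J = J := by
      rw [hB, add_mul, one_mul, Matrix.smul_mul, hLJ, smul_zero, add_zero]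
    have hBH : B * (ε • 1 + J) = Hf ε := by
      rw [mul_add, Matrix.mul_smul, mul_one, hBJ, hHf, hCB]
    have h1ε : (1:ℝ) + ε ≠ 0 := by linarith
    have hinvJ : (ε • (1 : Matrix m m ℝ) + J) *
        (ε⁻¹ • (1 : Matrix m m ℝ) - (ε * (1 + ε))⁻¹ • J) = 1 := by
      rw [mul_sub, Matrix.mul_smul, Matrix.mul_smul, mul_one,
        add_mul, Matrix.smul_mul, one_mul, hJ2]
      rw [smul_add, smul_add, smul_smul, smul_smul, inv_mul_cancel₀ hεne,
        one_smul]
      have hcoef : ε⁻¹ • J = ((ε * (1 + ε))⁻¹ * ε) • J + (ε * (1 + ε))⁻¹ • J := by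
        rw [← add_smul]
        congr 1
        field_simp <;> ring
      rw [hcoef]
      abel
    have hεJdet : IsUnit (ε • (1 : Matrix m m ℝ) + J).det :=
      Matrix.isUnit_det_of_right_inverse hinvJ
    have hHdet : IsUnit (Hf ε).det := by
      rw [← hBH, Matrix.det_mul]
      exact hBdet.mul hεJdet
    have hfinal : B⁻¹ = (ε • 1 + J) * (Hf ε)⁻¹ := by
      apply Matrix.inv_eq_right_inv
      rw [← mul_assoc, hBH, Matrix.mul_nonsing_inv _ hHdet]
    rw [hfinal, Matrix.inv_def, Ring.inverse_eq_inv]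
  · have hHcont : Tendsto Hf (𝓝 0) (𝓝 K) := by
      rw [← hH0]
      apply Continuous.tendsto
      rw [hHf]
      exact (continuous_const.sub
        ((continuous_const.sub continuous_id).smul continuous_const)).add
        continuous_const
    have hdetT : Tendsto (fun ε => (Hf ε).det) (𝓝 0) (𝓝 K.det) :=
      ((Continuous.matrix_det continuous_id).tendsto K).comp hHcont
    have hadjT : Tendsto (fun ε => (Hf ε).adjugate) (𝓝 0) (𝓝 K.adjugate) :=
      ((Continuous.matrix_adjugate continuous_id).tendsto K).comp hHcont
    have hinvT : Tendsto (fun ε => (Hf ε).det⁻¹ • (Hf ε).adjugate) (𝓝 0)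
        (𝓝 K⁻¹) := by
      rw [Matrix.inv_def, Ring.inverse_eq_inv]
      exact (hdetT.inv₀ hKne).smul hadjT
    have hfacT : Tendsto (fun ε : ℝ => ε • (1 : Matrix m m ℝ) + J) (𝓝 0)
        (𝓝 J) := by
      have hc : Continuous (fun ε : ℝ => ε • (1 : Matrix m m ℝ) + J) :=
        (continuous_id.smul continuous_const).add continuous_const
      have := hc.tendsto 0
      simpa using this
    have hcmul : Continuous (fun p : Matrix m m ℝ × Matrix m m ℝ => p.1 * p.2) :=
      Continuous.matrix_mul continuous_fst continuous_snd
    have hmulT := (hcmul.tendsto (J, K⁻¹)).comp (hfacT.prodMk_nhds hinvT)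
    rw [show J * K⁻¹ = J from hJKinv] at hmulT
    exact hmulT
end DG2

open DG DG2

/-- Regularized DeGroot pooling with a hub: for `δ ∈ (0,1]` and `γ = δ⁻¹ - 1`,
the eigenprojection of `I′ - Q_{δ,v}` equals
`1′·(1/(1+δ))·[vᵀ(I + γ(I-P))⁻¹  δ]`, and as `δ → 0⁺` it converges to
`1′·[vᵀ(I-P)^⊢  0]`. -/
theorem eigenprojection_regularized_deGroot {n : ℕ}
    (P J : Matrix (Fin n) (Fin n) ℝ)
    (hP : IsRowStochastic P) (hJ : IsEigenprojection (1 - P) J)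
    (v : Fin n → ℝ) (hv : ∀ i, 0 ≤ v i) (hvsum : ∑ i, v i = 1)
    (δ : ℝ) (hδ : 0 < δ) (hδ1 : δ ≤ 1) (γ : ℝ) (hγ : γ = δ⁻¹ - 1) :
    IsEigenprojection (1 - regQ P δ v)
      (Matrix.vecMulVec (fun _ => (1 : ℝ))
        (Sum.elim
          (fun j => (1 + δ)⁻¹ * (v ᵥ* (1 + γ • (1 - P))⁻¹) j)
          (fun _ => δ / (1 + δ)))) ∧
    Tendsto
      (fun ε : ℝ =>
        Matrix.vecMulVec (fun _ : Fin n ⊕ Unit => (1 : ℝ))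
          (Sum.elim
            (fun j => (1 + ε)⁻¹ * (v ᵥ* (1 + (ε⁻¹ - 1) • (1 - P))⁻¹) j)
            (fun _ : Unit => ε / (1 + ε))))
      (𝓝[>] 0)
      (𝓝 (Matrix.vecMulVec (fun _ : Fin n ⊕ Unit => (1 : ℝ))
        (Sum.elim (fun j => (v ᵥ* J) j) (fun _ : Unit => (0 : ℝ))))) := by
  classical
  have hn : Nonempty (Fin n) := by
    rcases isEmpty_or_nonempty (Fin n) with h | h
    · rw [Finset.univ_eq_empty, Finset.sum_empty] at hvsum
      exact absurd hvsum (by norm_num)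
    · exact h
  have hδ0 : δ ≠ 0 := ne_of_gt hδ
  have h1δpos : (0:ℝ) < 1 + δ := by linarith
  have h1δ : (1:ℝ) + δ ≠ 0 := ne_of_gt h1δpos
  constructor
  · -- Part 1
    set B : Matrix (Fin n) (Fin n) ℝ := 1 + γ • (1 - P) with hB
    have hCB : δ • B = 1 - (1 - δ) • P := by
      rw [hB, hγ]
      ext i j
      simp only [Matrix.smul_apply, Matrix.add_apply, Matrix.sub_apply,
        Matrix.one_apply]
      split_ifs <;> simp only [smul_eq_mul] <;> field_simp <;> ring
    have hCunit : IsUnit (1 - (1 - δ) • P) :=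
      isUnit_one_sub_smul hP (by linarith) (by linarith)
    have hCdet : IsUnit (1 - (1 - δ) • P).det :=
      (Matrix.isUnit_iff_isUnit_det _).mp hCunit
    have hBdet : IsUnit B.det := by
      rw [isUnit_iff_ne_zero] at hCdet ⊢
      intro h
      rw [← hCB, Matrix.det_smul, h, mul_zero] at hCdet
      exact hCdet rfl
    set u : Fin n → ℝ := v ᵥ* B⁻¹ with hu
    have huB : u ᵥ* B = v := by
      rw [hu, Matrix.vecMul_vecMul, Matrix.nonsing_inv_mul _ hBdet,
        Matrix.vecMul_one]
    have huC : u ᵥ* (1 - (1 - δ) • P) = δ • v := by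
      rw [← hCB, vecMul_smul_mat, huB]
    have hurec : ∀ b, u b = (1 - δ) * (u ᵥ* P) b + δ * v b := by
      intro b
      have h := congrFun huC b
      rw [Matrix.vecMul_sub, Matrix.vecMul_one, vecMul_smul_mat] at h
      have h' : u b - (1 - δ) * (u ᵥ* P) b = δ * v b := by
        simpa using h
      linarith
    have hu1 : ∑ j, u j = 1 := by
      have hBones : B *ᵥ (fun _ => (1:ℝ)) = fun _ => 1 := by
        have hPo : P *ᵥ (fun _ => (1:ℝ)) = fun _ => 1 := by
          funext i
          rw [mulVec_apply']
          simp only [mul_one]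
          exact hP.2 i
        rw [hB, Matrix.add_mulVec, Matrix.one_mulVec, smul_mulVec,
          Matrix.sub_mulVec, Matrix.one_mulVec, hPo]
        funext i
        simp
      have h1 : u ⬝ᵥ (fun _ => (1:ℝ)) = v ⬝ᵥ (fun _ => (1:ℝ)) := by
        calc u ⬝ᵥ (fun _ => (1:ℝ)) = u ⬝ᵥ (B *ᵥ fun _ => 1) := by rw [hBones]
          _ = (u ᵥ* B) ⬝ᵥ (fun _ => 1) := Matrix.dotProduct_mulVec _ _ _
          _ = v ⬝ᵥ (fun _ => (1:ℝ)) := by rw [huB]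
      simpa [dotProduct, hvsum] using h1
    set π : Fin n ⊕ Unit → ℝ :=
      Sum.elim (fun j => (1 + δ)⁻¹ * u j) (fun _ => δ / (1 + δ)) with hπ
    have hπsum : ∑ k, π k = 1 := by
      rw [hπ, Fintype.sum_sum_type]
      simp only [Sum.elim_inl, Sum.elim_inr]
      rw [← Finset.mul_sum, hu1]
      simp
      field_simp
    have hQrow : ∀ i, ∑ k, regQ P δ v i k = 1 := by
      intro i
      cases i with
      | inl a =>
        rw [Fintype.sum_sum_type]
        simp only [regQ, Matrix.fromBlocks_apply₁₁, Matrix.fromBlocks_apply₁₂,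
          Matrix.smul_apply, smul_eq_mul, Matrix.of_apply]
        rw [← Finset.mul_sum, hP.2 a]
        simp
      | inr b =>
        rw [Fintype.sum_sum_type]
        simp only [regQ, Matrix.fromBlocks_apply₂₁, Matrix.fromBlocks_apply₂₂,
          Matrix.of_apply, Matrix.zero_apply]
        simp [hvsum]
    have hstat : ∀ jj, ∑ k, π k * regQ P δ v k jj = π jj := by
      intro jj
      cases jj with
      | inl b =>
        rw [Fintype.sum_sum_type]
        simp only [hπ, Sum.elim_inl, Sum.elim_inr, regQ,
          Matrix.fromBlocks_apply₁₁, Matrix.fromBlocks_apply₂₁,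
          Matrix.smul_apply, smul_eq_mul, Matrix.of_apply]
        have hvP : (u ᵥ* P) b = ∑ a, u a * P a b := vecMul_apply' P u b
        have hstep : ∀ a : Fin n, (1 + δ)⁻¹ * u a * ((1 - δ) * P a b)
            = ((1 + δ)⁻¹ * (1 - δ)) * (u a * P a b) := fun a => by ring
        rw [Finset.sum_congr rfl fun a _ => hstep a, ← Finset.mul_sum, ← hvP]
        have hub := hurec b
        simp only [Fintype.sum_unique]
        field_simp
        linarith [hub]
      | inr b =>
        rw [Fintype.sum_sum_type]
        simp only [hπ, Sum.elim_inl, Sum.elim_inr, regQ,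
          Matrix.fromBlocks_apply₁₂, Matrix.fromBlocks_apply₂₂,
          Matrix.of_apply, Matrix.zero_apply, mul_zero]
        have hstep : ∀ a : Fin n, (1 + δ)⁻¹ * u a * δ
            = ((1 + δ)⁻¹ * δ) * u a := fun a => by ring
        rw [Finset.sum_congr rfl fun a _ => hstep a, ← Finset.mul_sum, hu1]
        simp
        field_simp
    set M : Matrix (Fin n ⊕ Unit) (Fin n ⊕ Unit) ℝ :=
      Matrix.vecMulVec (fun _ => (1:ℝ)) π with hM
    have hMapp : ∀ i j, M i j = π j := by
      intro i j
      rw [hM, Matrix.vecMulVec_apply, one_mul]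
    have hM2 : M * M = M := by
      ext i j
      rw [Matrix.mul_apply, hMapp i j]
      simp only [hMapp]
      rw [← Finset.sum_mul, hπsum, one_mul]
    have hQM : regQ P δ v * M = M := by
      ext i j
      rw [Matrix.mul_apply, hMapp i j]
      simp only [hMapp]
      rw [← Finset.sum_mul, hQrow i, one_mul]
    have hMQ : M * regQ P δ v = M := by
      ext i j
      rw [Matrix.mul_apply, hMapp i j]
      simp only [hMapp]
      exact hstat j
    have hAM : (1 - regQ P δ v) * M = 0 := by
      rw [sub_mul, one_mul, hQM, sub_self]
    have hMA : M * (1 - regQ P δ v) = 0 := by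
      rw [mul_sub, mul_one, hMQ, sub_self]
    have hMne : M ≠ 0 := by
      intro h
      have h2 := congrFun (congrFun h (Sum.inr ())) (Sum.inr ())
      rw [hMapp] at h2
      simp only [hπ, Sum.elim_inr, Matrix.zero_apply] at h2
      have : δ / (1 + δ) ≠ 0 := div_ne_zero hδ0 h1δ
      exact this h2
    have hUdet : IsUnit ((1 - regQ P δ v) + M).det := by
      rw [← Matrix.isUnit_iff_isUnit_det]
      apply isUnit_of_ker
      intro x hx
      have hMx : ∀ i, (M *ᵥ x) i = ∑ k, π k * x k := by
        intro i
        rw [mulVec_apply']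
        simp only [hMapp]
      set c : ℝ := ∑ k, π k * x k with hc
      have hexp : ∀ i, x i - (regQ P δ v *ᵥ x) i + c = 0 := by
        intro i
        have h := congrFun hx i
        rw [Matrix.add_mulVec, Matrix.sub_mulVec, Matrix.one_mulVec] at h
        have := hMx i
        simp only [Pi.add_apply, Pi.sub_apply, Pi.zero_apply] at h
        rw [this] at h
        exact h
      have hdotQ : ∑ i, π i * (regQ P δ v *ᵥ x) i = c := by
        have : ∀ i, π i * (regQ P δ v *ᵥ x) i
            = ∑ k, π i * (regQ P δ v i k * x k) := by
          intro i
          rw [mulVec_apply', Finset.mul_sum]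
        rw [Finset.sum_congr rfl fun i _ => this i, Finset.sum_comm]
        rw [hc]
        apply Finset.sum_congr rfl
        intro k _
        have : ∀ i, π i * (regQ P δ v i k * x k)
            = (π i * regQ P δ v i k) * x k := fun i => by ring
        rw [Finset.sum_congr rfl fun i _ => this i, ← Finset.sum_mul, hstat k]
      have hc0 : c = 0 := by
        have hsum0 : ∑ i, π i * (x i - (regQ P δ v *ᵥ x) i + c) = 0 := by
          apply Finset.sum_eq_zero
          intro i _
          rw [hexp i, mul_zero]
        have hexpand : ∑ i, π i * (x i - (regQ P δ v *ᵥ x) i + c)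
            = c - c + c := by
          rw [Finset.sum_congr rfl fun i _ => (by ring :
            π i * (x i - (regQ P δ v *ᵥ x) i + c)
              = π i * x i - π i * (regQ P δ v *ᵥ x) i + π i * c)]
          rw [Finset.sum_add_distrib, Finset.sum_sub_distrib, hdotQ,
            ← Finset.sum_mul, hπsum, one_mul, hc]
        rw [hexpand] at hsum0
        linarith
      have hfix : ∀ i, x i = (regQ P δ v *ᵥ x) i := by
        intro i
        have := hexp i
        rw [hc0] at this
        linarith
      set t : ℝ := x (Sum.inr ()) with ht
      have hxa : ∀ a, x (Sum.inl a)
          = (1 - δ) * (∑ j, P a j * x (Sum.inl j)) + δ * t := by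
        intro a
        rw [hfix (Sum.inl a), mulVec_apply', Fintype.sum_sum_type]
        simp only [regQ, Matrix.fromBlocks_apply₁₁, Matrix.fromBlocks_apply₁₂,
          Matrix.smul_apply, smul_eq_mul, Matrix.of_apply]
        rw [Finset.sum_congr rfl (fun j _ => (by ring :
          (1 - δ) * P a j * x (Sum.inl j) = (1-δ) * (P a j * x (Sum.inl j)))),
          ← Finset.mul_sum]
        simp [ht]
      have hxt : t = ∑ j, v j * x (Sum.inl j) := by
        conv_lhs => rw [ht, hfix (Sum.inr ())]
        rw [mulVec_apply', Fintype.sum_sum_type]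
        simp [regQ]
      have hconst : ∀ a, x (Sum.inl a) = t := by
        obtain ⟨amax, _, hmax⟩ := Finset.exists_max_image Finset.univ
          (fun a => x (Sum.inl a)) Finset.univ_nonempty
        obtain ⟨amin, _, hmin⟩ := Finset.exists_min_image Finset.univ
          (fun a => x (Sum.inl a)) Finset.univ_nonempty
        have hts : t ≤ x (Sum.inl amax) := by
          rw [hxt]
          exact dot_le v (fun j => x (Sum.inl j)) (x (Sum.inl amax)) hv hvsum
            (fun j => hmax j (Finset.mem_univ j))
        have hst : x (Sum.inl amax) ≤ t := by
          have hPd : ∑ j, P amax j * x (Sum.inl j) ≤ x (Sum.inl amax) :=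
            dot_le (P amax) (fun j => x (Sum.inl j)) (x (Sum.inl amax))
              (hP.1 amax) (hP.2 amax) (fun j => hmax j (Finset.mem_univ j))
          have := hxa amax
          nlinarith
        have htmax : x (Sum.inl amax) = t := le_antisymm hst hts
        have htmin : x (Sum.inl amin) = t := by
          have h1 : x (Sum.inl amin) ≤ t := by
            rw [hxt]
            exact dot_ge v (fun j => x (Sum.inl j)) (x (Sum.inl amin)) hv hvsum
              (fun j => hmin j (Finset.mem_univ j))
          have hPd : x (Sum.inl amin) ≤ ∑ j, P amin j * x (Sum.inl j) :=
            dot_ge (P amin) (fun j => x (Sum.inl j)) (x (Sum.inl amin))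
              (hP.1 amin) (hP.2 amin) (fun j => hmin j (Finset.mem_univ j))
          have h2 : t ≤ x (Sum.inl amin) := by
            have := hxa amin
            nlinarith
          exact le_antisymm h1 h2
        intro a
        have h1 := hmax a (Finset.mem_univ a)
        have h2 := hmin a (Finset.mem_univ a)
        rw [htmax] at h1
        rw [htmin] at h2
        linarith
      have hall : ∀ k, x k = t := by
        intro k
        cases k with
        | inl a => exact hconst a
        | inr b => cases b; exact ht.symm
      have hct : c = t := by
        rw [hc, Finset.sum_congr rfl fun k _ => by rw [hall k],
          ← Finset.sum_mul, hπsum, one_mul]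
      have ht0 : t = 0 := by rw [← hct, hc0]
      funext k
      rw [hall k, ht0]
      rfl
    exact isEigenprojection_of _ M hM2 hAM hMA hMne hUdet
  · -- Part 2
    obtain ⟨N, hNeq, hNT⟩ := tendsto_reg_inv hP hJ
    have hcontV : Continuous (fun x : (Fin n ⊕ Unit) → ℝ =>
        Matrix.vecMulVec (fun _ : Fin n ⊕ Unit => (1:ℝ)) x) := by
      apply continuous_matrix
      intro i j
      simp only [Matrix.vecMulVec_apply, one_mul]
      exact continuous_apply j
    have hw : Tendsto (fun ε : ℝ =>
        (Sum.elim
          (fun j => (1 + ε)⁻¹ * (v ᵥ* (1 + (ε⁻¹ - 1) • (1 - P))⁻¹) j)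
          (fun _ : Unit => ε / (1 + ε)) : (Fin n ⊕ Unit) → ℝ))
        (𝓝[>] 0)
        (𝓝 (Sum.elim (fun j => (v ᵥ* J) j) (fun _ : Unit => (0:ℝ)))) := by
      rw [tendsto_pi_nhds]
      intro k
      cases k with
      | inl b =>
        simp only [Sum.elim_inl]
        have hev : (fun ε : ℝ => (1 + ε)⁻¹ * (v ᵥ* N ε) b)
            =ᶠ[𝓝[>] (0:ℝ)]
            (fun ε => (1 + ε)⁻¹ * (v ᵥ* (1 + (ε⁻¹ - 1) • (1 - P))⁻¹) b) := by
          filter_upwards [Ioc_mem_nhdsGT (zero_lt_one)] with ε hε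
          rw [hNeq ε hε]
        apply Filter.Tendsto.congr' hev
        apply Tendsto.mono_left ?_ nhdsWithin_le_nhds
        have hscal : Tendsto (fun ε : ℝ => (1 + ε)⁻¹) (𝓝 0) (𝓝 1) := by
          have h1 : Tendsto (fun ε : ℝ => 1 + ε) (𝓝 0) (𝓝 (1 + 0)) :=
            (continuous_const.add continuous_id).tendsto 0
          have h2 := h1.inv₀ (by norm_num)
          simpa using h2
        have hentry : Tendsto (fun ε => (v ᵥ* N ε) b) (𝓝 0)
            (𝓝 ((v ᵥ* J) b)) := by
          have hrw : ∀ A : Matrix (Fin n) (Fin n) ℝ,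
              (v ᵥ* A) b = ∑ i, v i * A i b := fun A => DG.vecMul_apply' A v b
          simp only [hrw]
          apply tendsto_finset_sum
          intro i _
          exact tendsto_const_nhds.mul
            (((continuous_id.matrix_elem i b).tendsto J).comp hNT)
        have hfin := hscal.mul hentry
        simpa using hfin
      | inr b =>
        simp only [Sum.elim_inr]
        have hden : Tendsto (fun ε : ℝ => 1 + ε) (𝓝[>] 0) (𝓝 1) := by
          have : Tendsto (fun ε : ℝ => 1 + ε) (𝓝 0) (𝓝 (1 + 0)) :=
            (continuous_const.add continuous_id).tendsto 0
          simpa using this.mono_left nhdsWithin_le_nhds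
        have hnum : Tendsto (fun ε : ℝ => ε) (𝓝[>] 0) (𝓝 0) :=
          tendsto_id.mono_left nhdsWithin_le_nhds
        have := hnum.div hden one_ne_zero
        rw [zero_div] at this
        exact this
    have := (hcontV.tendsto _).comp hw
    exact this
end

section
/- Let P be an n×n row-stochastic matrix, let v ∈ ℝⁿ be a distribution vector, let δ ∈ (0,1], set γ = δ⁻¹ − 1 and V = 1vᵀ, let J̄ = (I−P)^⊢, and let x⁰ ∈ ℝⁿ. Then: (1) ((1−δ)P + δV)^k · x⁰ converges as k → ∞ to 1·(vᵀ(I + γ(I−P))⁻¹ x⁰); (2) the double limit lim_{δ→0⁺} lim_{k→∞} ((1−δ)P + δV)^k x⁰ equals 1·(vᵀJ̄ x⁰); (3) if v = (1/n)·1, then the double limit equals 1·(1/n)·Σ_{j=1}^n J̄_{·j} x⁰_j, where J̄_{·j} = Σ_{i=1}^n J̄_{ij} is the j-th column sum of J̄. (Regularization of PageRank type for DeGroot's process.) -/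
open Matrix Filter Topology

namespace ConsensusAux

variable {n : ℕ} {P : Matrix (Fin n) (Fin n) ℝ}

lemma stoch_mulVec_norm (hP : IsRowStochastic P) (y : Fin n → ℝ) :
    ‖P *ᵥ y‖ ≤ ‖y‖ := by
  rw [pi_norm_le_iff_of_nonneg (norm_nonneg y)]
  intro i
  rw [Real.norm_eq_abs]
  have h1 : (P *ᵥ y) i = ∑ j, P i j * y j := rfl
  rw [h1]
  calc |∑ j, P i j * y j| ≤ ∑ j, |P i j * y j| := Finset.abs_sum_le_sum_abs _ _
    _ ≤ ∑ j, P i j * ‖y‖ := by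
        refine Finset.sum_le_sum fun j _ => ?_
        rw [abs_mul, abs_of_nonneg (hP.1 i j)]
        exact mul_le_mul_of_nonneg_left
          ((Real.norm_eq_abs _) ▸ norm_le_pi_norm y j) (hP.1 i j)
    _ = ‖y‖ := by rw [← Finset.sum_mul, hP.2 i, one_mul]

lemma stoch_pow_mulVec_norm (hP : IsRowStochastic P) (k : ℕ) (y : Fin n → ℝ) :
    ‖(P ^ k) *ᵥ y‖ ≤ ‖y‖ := by
  induction k with
  | zero => simp
  | succ k ih =>
      rw [pow_succ', ← Matrix.mulVec_mulVec]
      exact (stoch_mulVec_norm hP _).trans ih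

lemma lower_bound (hP : IsRowStochastic P) {t : ℝ} (ht : 0 ≤ t) (y : Fin n → ℝ) :
    (1 - t) * ‖y‖ ≤ ‖(1 - t • P) *ᵥ y‖ := by
  rcases isEmpty_or_nonempty (Fin n) with hE | hE
  · have hy : y = 0 := Subsingleton.elim _ _
    simp [hy]
  obtain ⟨i, -, hi⟩ := Finset.univ.exists_max_image (fun j => |y j|) Finset.univ_nonempty
  have hnorm : ‖y‖ = |y i| := by
    refine le_antisymm ?_ (by rw [← Real.norm_eq_abs]; exact norm_le_pi_norm y i)
    rw [pi_norm_le_iff_of_nonneg (abs_nonneg _)]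
    intro j; rw [Real.norm_eq_abs]; exact hi j (Finset.mem_univ j)
  have hPy : |(P *ᵥ y) i| ≤ |y i| := by
    have h1 : (P *ᵥ y) i = ∑ j, P i j * y j := rfl
    rw [h1]
    calc |∑ j, P i j * y j| ≤ ∑ j, |P i j * y j| := Finset.abs_sum_le_sum_abs _ _
      _ ≤ ∑ j, P i j * |y i| := by
          refine Finset.sum_le_sum fun j _ => ?_
          rw [abs_mul, abs_of_nonneg (hP.1 i j)]
          exact mul_le_mul_of_nonneg_left (hi j (Finset.mem_univ j)) (hP.1 i j)
      _ = |y i| := by rw [← Finset.sum_mul, hP.2 i, one_mul]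
  have hco : ((1 - t • P) *ᵥ y) i = y i - t * (P *ᵥ y) i := by
    rw [Matrix.sub_mulVec, Matrix.one_mulVec, Matrix.smul_mulVec]
    simp
  have h2 : |t * (P *ᵥ y) i| ≤ t * |y i| := by
    rw [abs_mul, abs_of_nonneg ht]
    exact mul_le_mul_of_nonneg_left hPy ht
  have h1 : |y i| - |t * (P *ᵥ y) i| ≤ |y i - t * (P *ᵥ y) i| :=
    abs_sub_abs_le_abs_sub _ _
  have h3 : |((1 - t • P) *ᵥ y) i| ≤ ‖(1 - t • P) *ᵥ y‖ := by
    rw [← Real.norm_eq_abs]; exact norm_le_pi_norm _ i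
  rw [hco] at h3
  rw [hnorm]
  nlinarith [h1, h2, h3]

lemma isUnit_det_one_sub_smul (hP : IsRowStochastic P) {t : ℝ}
    (ht0 : 0 ≤ t) (ht1 : t < 1) : IsUnit (1 - t • P).det := by
  rw [isUnit_iff_ne_zero]
  intro h
  obtain ⟨y, hy0, hy⟩ := (Matrix.exists_mulVec_eq_zero_iff).2 h
  have h2 := lower_bound hP ht0 y
  rw [hy, norm_zero] at h2
  have h3 : ‖y‖ = 0 := by nlinarith [norm_nonneg y]
  exact hy0 (norm_eq_zero.1 h3)

lemma inv_mulVec_norm (hP : IsRowStochastic P) {t : ℝ} (ht0 : 0 ≤ t) (ht1 : t < 1)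
    (z : Fin n → ℝ) : ‖(1 - t • P)⁻¹ *ᵥ z‖ ≤ (1 - t)⁻¹ * ‖z‖ := by
  have hdet := isUnit_det_one_sub_smul hP ht0 ht1
  have h1 : (1 - t • P) *ᵥ ((1 - t • P)⁻¹ *ᵥ z) = z := by
    rw [Matrix.mulVec_mulVec, Matrix.mul_nonsing_inv _ hdet, Matrix.one_mulVec]
  have h2 := lower_bound hP ht0 ((1 - t • P)⁻¹ *ᵥ z)
  rw [h1] at h2
  have h3 : (0:ℝ) < 1 - t := by linarith
  calc ‖(1 - t • P)⁻¹ *ᵥ z‖ = (1 - t)⁻¹ * ((1 - t) * ‖(1 - t • P)⁻¹ *ᵥ z‖) := by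
        field_simp
    _ ≤ (1 - t)⁻¹ * ‖z‖ := mul_le_mul_of_nonneg_left h2 (inv_nonneg.2 h3.le)

lemma inv_smul_eq (hP : IsRowStochastic P) {ε : ℝ} (hε : 0 < ε) (hε1 : ε ≤ 1) :
    (1 + (ε⁻¹ - 1) • (1 - P))⁻¹ = ε • (1 - (1 - ε) • P)⁻¹ := by
  have hdet := isUnit_det_one_sub_smul hP (t := 1 - ε) (by linarith) (by linarith)
  apply Matrix.inv_eq_right_inv
  have h1 : (1 : Matrix (Fin n) (Fin n) ℝ) + (ε⁻¹ - 1) • (1 - P)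
      = ε⁻¹ • (1 - (1 - ε) • P) := by
    ext i j
    simp only [Matrix.add_apply, Matrix.smul_apply, Matrix.sub_apply, Matrix.one_apply,
      smul_eq_mul]
    have hε' : ε ≠ 0 := hε.ne'
    split_ifs <;> field_simp <;> ring
  rw [h1, Matrix.smul_mul, Matrix.mul_smul, smul_smul, inv_mul_cancel₀ hε.ne', one_smul,
    Matrix.mul_nonsing_inv _ hdet]

lemma dist_dot_bound {v : Fin n → ℝ} (hv : ∀ i, 0 ≤ v i) (hvsum : ∑ i, v i = 1)
    (w : Fin n → ℝ) : |v ⬝ᵥ w| ≤ ‖w‖ := by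
  have h1 : v ⬝ᵥ w = ∑ i, v i * w i := rfl
  rw [h1]
  calc |∑ i, v i * w i| ≤ ∑ i, |v i * w i| := Finset.abs_sum_le_sum_abs _ _
    _ ≤ ∑ i, v i * ‖w‖ := by
        refine Finset.sum_le_sum fun i _ => ?_
        rw [abs_mul, abs_of_nonneg (hv i)]
        exact mul_le_mul_of_nonneg_left
          ((Real.norm_eq_abs _) ▸ norm_le_pi_norm w i) (hv i)
    _ = ‖w‖ := by rw [← Finset.sum_mul, hvsum, one_mul]

lemma mulVec_bound (A : Matrix (Fin n) (Fin n) ℝ) :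
    ∃ C : ℝ, 0 ≤ C ∧ ∀ z, ‖A *ᵥ z‖ ≤ C * ‖z‖ := by
  refine ⟨∑ i, ∑ j, |A i j|,
    Finset.sum_nonneg fun _ _ => Finset.sum_nonneg fun _ _ => abs_nonneg _, fun z => ?_⟩
  rw [pi_norm_le_iff_of_nonneg (r := (∑ i, ∑ j, |A i j|) * ‖z‖) (mul_nonneg
    (Finset.sum_nonneg fun _ _ => Finset.sum_nonneg fun _ _ => abs_nonneg _) (norm_nonneg z))]
  intro i
  rw [Real.norm_eq_abs]
  have h1 : (A *ᵥ z) i = ∑ j, A i j * z j := rfl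
  rw [h1]
  calc |∑ j, A i j * z j| ≤ ∑ j, |A i j * z j| := Finset.abs_sum_le_sum_abs _ _
    _ ≤ ∑ j, |A i j| * ‖z‖ := by
        refine Finset.sum_le_sum fun j _ => ?_
        rw [abs_mul]
        exact mul_le_mul_of_nonneg_left
          ((Real.norm_eq_abs _) ▸ norm_le_pi_norm z j) (abs_nonneg _)
    _ ≤ (∑ i, ∑ j, |A i j|) * ‖z‖ := by
        rw [← Finset.sum_mul]
        refine mul_le_mul_of_nonneg_right ?_ (norm_nonneg z)
        exact Finset.single_le_sum
          (f := fun i => ∑ j, |A i j|)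
          (fun _ _ => Finset.sum_nonneg fun _ _ => abs_nonneg _) (Finset.mem_univ i)

lemma eq_of_mulVec_eq {A B : Matrix (Fin n) (Fin n) ℝ}
    (h : ∀ x, A *ᵥ x = B *ᵥ x) : A = B := by
  ext i j
  have := congrFun (h (Pi.single j 1)) i
  simpa using this

lemma sq_ker (hP : IsRowStochastic P) (x : Fin n → ℝ)
    (h : (1 - P) *ᵥ ((1 - P) *ᵥ x) = 0) : (1 - P) *ᵥ x = 0 := by
  set y := (1 - P) *ᵥ x with hy
  have hyx : y = x - P *ᵥ x := by rw [hy, Matrix.sub_mulVec, Matrix.one_mulVec]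
  have hyP : P *ᵥ y = y := by
    have h2 : y - P *ᵥ y = 0 := by
      rwa [Matrix.sub_mulVec, Matrix.one_mulVec] at h
    exact (sub_eq_zero.mp h2).symm
  have hxy : ∀ k : ℕ, (P ^ k) *ᵥ x = x - (k : ℝ) • y := by
    intro k
    induction k with
    | zero => simp
    | succ k ih =>
        have hPx : P *ᵥ x = x - y := by
          rw [hyx]; abel
        rw [pow_succ', ← Matrix.mulVec_mulVec, ih, Matrix.mulVec_sub, Matrix.mulVec_smul,
          hyP, hPx]
        push_cast
        ext i
        simp [Pi.sub_apply, Pi.smul_apply, smul_eq_mul]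
        ring
  by_contra hy0
  have hyne : y ≠ 0 := hy0
  obtain ⟨i, hi⟩ := Function.ne_iff.1 hyne
  have hi' : y i ≠ 0 := by simpa using hi
  have h4 : (0:ℝ) < |y i| := abs_pos.2 hi'
  obtain ⟨k, hk⟩ := exists_nat_gt ((‖x‖ + |x i|) / |y i|)
  have h1 : ‖(P ^ k) *ᵥ x‖ ≤ ‖x‖ := stoch_pow_mulVec_norm hP k x
  rw [hxy k] at h1
  have h2 : |x i - (k : ℝ) * y i| ≤ ‖x‖ := by
    have h5 := norm_le_pi_norm (x - (k : ℝ) • y) i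
    rw [Real.norm_eq_abs] at h5
    simp only [Pi.sub_apply, Pi.smul_apply, smul_eq_mul] at h5
    exact h5.trans h1
  have h3 : (k : ℝ) * |y i| ≤ ‖x‖ + |x i| := by
    have h6 : |(k : ℝ) * y i| - |x i| ≤ |x i - (k : ℝ) * y i| := by
      rw [abs_sub_comm]
      exact abs_sub_abs_le_abs_sub _ _
    rw [abs_mul, abs_of_nonneg (Nat.cast_nonneg k)] at h6
    linarith
  rw [div_lt_iff₀ h4] at hk
  linarith

lemma pow_ker (hP : IsRowStochastic P) {k : ℕ} (hk : 1 ≤ k) :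
    ∀ x : Fin n → ℝ, ((1 - P) ^ k) *ᵥ x = 0 → (1 - P) *ᵥ x = 0 := by
  induction k, hk using Nat.le_induction with
  | base => intro x h; rwa [pow_one] at h
  | succ k hk ih =>
      intro x h
      apply sq_ker hP
      apply ih
      rw [Matrix.mulVec_mulVec, ← pow_succ]
      exact h

lemma rank_set_nonempty (A : Matrix (Fin n) (Fin n) ℝ) :
    {k : ℕ | (A ^ (k + 1)).rank = (A ^ k).rank}.Nonempty := by
  by_contra h
  have h' : ∀ k : ℕ, (A ^ (k + 1)).rank ≠ (A ^ k).rank := fun k hk => h ⟨k, hk⟩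
  have hlt : ∀ k, (A ^ (k + 1)).rank < (A ^ k).rank := fun k =>
    lt_of_le_of_ne (by rw [pow_succ]; exact Matrix.rank_mul_le_left _ _) (h' k)
  have hb : ∀ k : ℕ, (A ^ k).rank + k ≤ (A ^ 0).rank := by
    intro k
    induction k with
    | zero => simp
    | succ k ih => have := hlt k; omega
  have h9 := hb (n + 1)
  have hr : (A ^ 0).rank = n := by rw [pow_zero, Matrix.rank_one, Fintype.card_fin]
  omega

lemma mul_vecMulVec (A : Matrix (Fin n) (Fin n) ℝ) (u w : Fin n → ℝ) :
    A * Matrix.vecMulVec u w = Matrix.vecMulVec (A *ᵥ u) w := by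
  ext i j
  simp only [Matrix.mul_apply, Matrix.vecMulVec_apply]
  have h1 : (A *ᵥ u) i = ∑ l, A i l * u l := rfl
  rw [h1, Finset.sum_mul]
  exact Finset.sum_congr rfl fun l _ => by ring

end ConsensusAux

open ConsensusAux

/-- PageRank-type regularization of DeGroot's process:
(1) `((1-δ)P + δV)^k x⁰ → 1·(vᵀ(I+γ(I-P))⁻¹x⁰)` as `k → ∞`, where `V = 1vᵀ`;
(2) the double limit (`k → ∞`, then `δ → 0⁺`) equals `1·(vᵀJ̄x⁰)`;
(3) if `v = (1/n)·1`, the double limit equals `1·(1/n)·Σⱼ J̄_{·j} x⁰ⱼ`. -/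
theorem consensus_pagerank_regularization {n : ℕ}
    (P J : Matrix (Fin n) (Fin n) ℝ)
    (hP : IsRowStochastic P) (hJ : IsEigenprojection (1 - P) J)
    (v : Fin n → ℝ) (hv : ∀ i, 0 ≤ v i) (hvsum : ∑ i, v i = 1)
    (δ : ℝ) (hδ : 0 < δ) (hδ1 : δ ≤ 1) (γ : ℝ) (hγ : γ = δ⁻¹ - 1)
    (x0 : Fin n → ℝ) :
    Tendsto
      (fun k : ℕ =>
        (((1 - δ) • P +
          δ • Matrix.vecMulVec (fun _ : Fin n => (1 : ℝ)) v) ^ k).mulVec x0)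
      atTop (𝓝 (fun _ => (v ᵥ* (1 + γ • (1 - P))⁻¹) ⬝ᵥ x0)) ∧
    Tendsto (fun ε : ℝ => (v ᵥ* (1 + (ε⁻¹ - 1) • (1 - P))⁻¹) ⬝ᵥ x0)
      (𝓝[>] 0) (𝓝 ((v ᵥ* J) ⬝ᵥ x0)) ∧
    ((v = fun _ => (n : ℝ)⁻¹) →
      Tendsto (fun ε : ℝ => (v ᵥ* (1 + (ε⁻¹ - 1) • (1 - P))⁻¹) ⬝ᵥ x0)
        (𝓝[>] 0)
        (𝓝 ((n : ℝ)⁻¹ * ∑ j, (∑ i, J i j) * x0 j))) := by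
  classical
  -- the index satisfies its defining property
  have hidx : ((1 - P) ^ (matIndex (1 - P) + 1)).rank = ((1 - P) ^ matIndex (1 - P)).rank :=
    Nat.sInf_mem (rank_set_nonempty (1 - P))
  -- kernel collapsing
  have hker : ∀ x : Fin n → ℝ,
      ((1 - P) ^ matIndex (1 - P)) *ᵥ x = 0 → (1 - P) *ᵥ x = 0 := by
    rcases Nat.eq_zero_or_pos (matIndex (1 - P)) with hm | hm
    · intro x hx
      rw [hm, pow_zero, Matrix.one_mulVec] at hx
      rw [hx, Matrix.mulVec_zero]
    · exact pow_ker hP hm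
  -- range factoring
  have hrange : ∀ x : Fin n → ℝ,
      (∃ b, ((1 - P) ^ matIndex (1 - P)) *ᵥ b = x) → ∃ b, (1 - P) *ᵥ b = x := by
    rcases Nat.eq_zero_or_pos (matIndex (1 - P)) with hm | hm
    · intro x _
      rw [hm, pow_zero, pow_one] at hidx
      have hr1 : ((1 : Matrix (Fin n) (Fin n) ℝ)).rank = n := by
        rw [Matrix.rank_one, Fintype.card_fin]
      have htop : LinearMap.range (1 - P).mulVecLin = ⊤ := by
        apply Submodule.eq_top_of_finrank_eq
        show (1 - P).rank = _
        rw [hidx, hr1, Module.finrank_pi, Fintype.card_fin]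
      have hx : x ∈ LinearMap.range (1 - P).mulVecLin := htop ▸ Submodule.mem_top
      obtain ⟨b, hb⟩ := hx
      exact ⟨b, by simpa [Matrix.mulVecLin_apply, Matrix.sub_mulVec] using hb⟩
    · rintro x ⟨b, hb⟩
      obtain ⟨k, hk⟩ := Nat.exists_eq_add_of_le hm
      refine ⟨((1 - P) ^ k) *ᵥ b, ?_⟩
      rw [Matrix.mulVec_mulVec, ← pow_succ']
      rw [show k + 1 = matIndex (1 - P) by omega]
      exact hb
  -- P * J = J
  have hAJ : (1 - P) * J = 0 := by
    apply eq_of_mulVec_eq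
    intro x
    rw [← Matrix.mulVec_mulVec, Matrix.zero_mulVec]
    apply hker
    have hx : J *ᵥ x ∈ LinearMap.range J.mulVecLin := ⟨x, by simp [Matrix.mulVecLin_apply]⟩
    rw [hJ.2.1] at hx
    simpa [Matrix.mulVecLin_apply] using hx
  have hPJ : P * J = J := by
    have h1 : J - P * J = 0 := by
      have h0 := hAJ
      rwa [Matrix.sub_mul, Matrix.one_mul] at h0
    exact (sub_eq_zero.mp h1).symm
  -- existence of B with (1 - P) * B = 1 - J
  have hB : ∃ B : Matrix (Fin n) (Fin n) ℝ, (1 - P) * B = 1 - J := by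
    have hcol : ∀ j, ∃ b, (1 - P) *ᵥ b = (1 - J) *ᵥ Pi.single j 1 := by
      intro j
      apply hrange
      have h1 : J *ᵥ ((1 - J) *ᵥ Pi.single j 1) = 0 := by
        rw [Matrix.mulVec_mulVec, Matrix.mul_sub, Matrix.mul_one, hJ.1, sub_self,
          Matrix.zero_mulVec]
      have hx : (1 - J) *ᵥ Pi.single j 1 ∈ LinearMap.ker J.mulVecLin := by
        rw [LinearMap.mem_ker]
        simpa [Matrix.mulVecLin_apply] using h1
      rw [hJ.2.2] at hx
      obtain ⟨b, hb⟩ := hx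
      exact ⟨b, by simpa [Matrix.mulVecLin_apply] using hb⟩
    choose b hb using hcol
    refine ⟨Matrix.of fun i j => b j i, ?_⟩
    ext i j
    have h2 := congrFun (hb j) i
    rw [Matrix.mulVec_single_one, Matrix.col_apply] at h2
    have h3 : ((1 - P) *ᵥ b j) i = ∑ l, (1 - P) i l * b j l := rfl
    rw [h3] at h2
    rw [Matrix.mul_apply]
    exact h2
  obtain ⟨B, hBdef⟩ := hB
  -- ===================== Part 1 =====================
  set M : Matrix (Fin n) (Fin n) ℝ := (1 - δ) • P with hMdef
  set D : Matrix (Fin n) (Fin n) ℝ := δ • Matrix.vecMulVec (fun _ : Fin n => (1 : ℝ)) v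
    with hDdef
  have hdetM : IsUnit (1 - M).det :=
    isUnit_det_one_sub_smul hP (t := 1 - δ) (by linarith) (by linarith)
  set W : Matrix (Fin n) (Fin n) ℝ := (1 - M)⁻¹ with hWdef
  have hone : P *ᵥ (fun _ => (1 : ℝ)) = fun _ => 1 := by
    funext i
    have h1 : (P *ᵥ fun _ => (1:ℝ)) i = ∑ j, P i j * 1 := rfl
    rw [h1]
    simp [hP.2 i]
  have hone2 : Matrix.vecMulVec (fun _ : Fin n => (1:ℝ)) v *ᵥ (fun _ => (1:ℝ))
      = fun _ => 1 := by
    funext i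
    have h1 : (Matrix.vecMulVec (fun _ : Fin n => (1:ℝ)) v *ᵥ fun _ => (1:ℝ)) i
        = ∑ j, (1 * v j) * 1 := rfl
    rw [h1]
    simp [hvsum]
  have hQ1 : (M + D) *ᵥ (fun _ => (1:ℝ)) = fun _ => 1 := by
    rw [Matrix.add_mulVec, hMdef, hDdef, Matrix.smul_mulVec,
      Matrix.smul_mulVec, hone, hone2]
    funext i
    simp
  have hQpow1 : ∀ k : ℕ, ((M + D) ^ k) *ᵥ (fun _ => (1:ℝ)) = fun _ => 1 := by
    intro k
    induction k with
    | zero => simp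
    | succ k ih => rw [pow_succ', ← Matrix.mulVec_mulVec, ih, hQ1]
  have hQD : ∀ k : ℕ, (M + D) ^ k * D = D := by
    intro k
    rw [hDdef, Matrix.mul_smul, ConsensusAux.mul_vecMulVec, hQpow1 k]
  have hQk : ∀ k : ℕ, (M + D) ^ k = M ^ k + D * (∑ i ∈ Finset.range k, M ^ i) := by
    intro k
    induction k with
    | zero => simp
    | succ k ih =>
        have hS : (∑ i ∈ Finset.range (k + 1), M ^ i)
            = (∑ i ∈ Finset.range k, M ^ i) * M + 1 := by
          rw [Finset.sum_range_succ', pow_zero, Finset.sum_mul]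
          simp [pow_succ]
        calc (M + D) ^ (k + 1) = (M + D) ^ k * (M + D) := pow_succ _ _
          _ = (M + D) ^ k * M + D := by rw [mul_add, hQD k]
          _ = (M ^ k + D * (∑ i ∈ Finset.range k, M ^ i)) * M + D := by rw [ih]
          _ = M ^ (k + 1) + D * (∑ i ∈ Finset.range (k + 1), M ^ i) := by
              rw [hS, pow_succ]
              noncomm_ring
  have hgeom : ∀ k : ℕ, (∑ i ∈ Finset.range k, M ^ i) = W - W * M ^ k := by
    intro k
    have h1 : (1 - M) * (∑ i ∈ Finset.range k, M ^ i) = 1 - M ^ k :=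
      mul_neg_geom_sum M k
    calc (∑ i ∈ Finset.range k, M ^ i)
        = (W * (1 - M)) * (∑ i ∈ Finset.range k, M ^ i) := by
          rw [hWdef, Matrix.nonsing_inv_mul _ hdetM, Matrix.one_mul]
      _ = W * ((1 - M) * (∑ i ∈ Finset.range k, M ^ i)) := Matrix.mul_assoc _ _ _
      _ = W * (1 - M ^ k) := by rw [h1]
      _ = W - W * M ^ k := by rw [Matrix.mul_sub, Matrix.mul_one]
  have hfun : ∀ k : ℕ, ((M + D) ^ k) *ᵥ x0
      = M ^ k *ᵥ x0 + ((D * W) *ᵥ x0 - (D * W) *ᵥ (M ^ k *ᵥ x0)) := by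
    intro k
    rw [hQk k, hgeom k, Matrix.mul_sub, ← Matrix.mul_assoc, Matrix.add_mulVec,
      Matrix.sub_mulVec, Matrix.mulVec_mulVec]
  have hinvδ : (1 + γ • (1 - P))⁻¹ = δ • W := by
    rw [hγ, hWdef, hMdef]
    exact inv_smul_eq hP hδ hδ1
  have hlim_target : (D * W) *ᵥ x0 = fun _ => (v ᵥ* (1 + γ • (1 - P))⁻¹) ⬝ᵥ x0 := by
    rw [hinvδ]
    funext i
    rw [← Matrix.dotProduct_mulVec, ← Matrix.mulVec_mulVec, hDdef,
      Matrix.smul_mulVec, Matrix.smul_mulVec]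
    have h1 : (Matrix.vecMulVec (fun _ : Fin n => (1:ℝ)) v *ᵥ (W *ᵥ x0)) i
        = ∑ j, (1 * v j) * (W *ᵥ x0) j := rfl
    have h2 : v ⬝ᵥ (W *ᵥ x0) = ∑ j, v j * (W *ᵥ x0) j := rfl
    simp only [Pi.smul_apply, smul_eq_mul, h1]
    rw [dotProduct_smul]
    rw [h2]
    simp only [one_mul, smul_eq_mul]
  have hM : ∀ (k : ℕ) (y : Fin n → ℝ), ‖M ^ k *ᵥ y‖ ≤ (1 - δ) ^ k * ‖y‖ := by
    intro k y
    have h1 : M ^ k = ((1 - δ) ^ k) • P ^ k := by rw [hMdef, smul_pow]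
    rw [h1, Matrix.smul_mulVec, norm_smul, Real.norm_eq_abs,
      abs_of_nonneg (pow_nonneg (by linarith) k)]
    exact mul_le_mul_of_nonneg_left (stoch_pow_mulVec_norm hP k y)
      (pow_nonneg (by linarith) _)
  obtain ⟨C, hC0, hC⟩ := mulVec_bound (D * W)
  have t0 : Tendsto (fun k : ℕ => (1 - δ) ^ k) atTop (𝓝 0) :=
    tendsto_pow_atTop_nhds_zero_of_lt_one (by linarith) (by linarith)
  have t1 : Tendsto (fun k : ℕ => M ^ k *ᵥ x0) atTop (𝓝 0) :=
    squeeze_zero_norm (fun k => hM k x0) (by simpa using t0.mul_const ‖x0‖)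
  have t2 : Tendsto (fun k : ℕ => (D * W) *ᵥ (M ^ k *ᵥ x0)) atTop (𝓝 0) := by
    refine squeeze_zero_norm
      (fun k => (hC _).trans (mul_le_mul_of_nonneg_left (hM k x0) hC0)) ?_
    have := (t0.mul_const ‖x0‖).const_mul C
    simpa [mul_assoc] using this
  have part1 : Tendsto
      (fun k : ℕ => (((1 - δ) • P +
        δ • Matrix.vecMulVec (fun _ : Fin n => (1 : ℝ)) v) ^ k).mulVec x0)
      atTop (𝓝 (fun _ => (v ᵥ* (1 + γ • (1 - P))⁻¹) ⬝ᵥ x0)) := by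
    have hfinal : Tendsto
        (fun k : ℕ => M ^ k *ᵥ x0 + ((D * W) *ᵥ x0 - (D * W) *ᵥ (M ^ k *ᵥ x0)))
        atTop (𝓝 ((D * W) *ᵥ x0)) := by
      have := t1.add (tendsto_const_nhds (x := (D * W) *ᵥ x0) (f := atTop)|>.sub t2)
      simpa using this
    rw [← hlim_target]
    exact hfinal.congr fun k => (hfun k).symm
  -- ===================== Part 2 =====================
  have part2 : Tendsto (fun ε : ℝ => (v ᵥ* (1 + (ε⁻¹ - 1) • (1 - P))⁻¹) ⬝ᵥ x0)
      (𝓝[>] 0) (𝓝 ((v ᵥ* J) ⬝ᵥ x0)) := by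
    have hLrw : (v ᵥ* J) ⬝ᵥ x0 = v ⬝ᵥ (J *ᵥ x0) := (Matrix.dotProduct_mulVec v J x0).symm
    rw [hLrw, ← tendsto_sub_nhds_zero_iff]
    refine squeeze_zero_norm' (a := fun ε : ℝ => (2 * ‖B *ᵥ x0‖) * ε) ?_ ?_
    · filter_upwards [Ioo_mem_nhdsGT_of_mem
        (show (0:ℝ) ∈ Set.Ico (0:ℝ) 1 from ⟨le_refl _, one_pos⟩)] with ε hε
      obtain ⟨hε0, hε1⟩ := hε
      set R : Matrix (Fin n) (Fin n) ℝ := (1 - (1 - ε) • P)⁻¹ with hRdef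
      have hdet : IsUnit (1 - (1 - ε) • P).det :=
        isUnit_det_one_sub_smul hP (by linarith) (by linarith)
      have hinv := inv_smul_eq hP hε0 hε1.le
      have hAJ2 : (1 - (1 - ε) • P) * J = ε • J := by
        rw [Matrix.sub_mul, Matrix.one_mul, Matrix.smul_mul, hPJ]
        nth_rewrite 1 [← one_smul ℝ J]
        rw [← sub_smul]
        norm_num
      have hRJ : ε • (R * J) = J := by
        have h1 : R * ((1 - (1 - ε) • P) * J) = ε • (R * J) := by
          rw [hAJ2, Matrix.mul_smul]
        rw [← Matrix.mul_assoc, Matrix.nonsing_inv_mul _ hdet, Matrix.one_mul] at h1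
        exact h1.symm
      have hRP : R * (1 - P) = 1 - ε • (R * P) := by
        have h2 : (1 : Matrix (Fin n) (Fin n) ℝ) - P = (1 - (1 - ε) • P) - ε • P := by
          rw [sub_sub, ← add_smul]
          norm_num
        rw [h2, Matrix.mul_sub, Matrix.nonsing_inv_mul _ hdet, Matrix.mul_smul]
      have hkey : ε • R - J = ε • B - (ε * ε) • (R * (P * B)) := by
        have h3 : ε • (R * (1 - J)) = ε • R - J := by
          rw [Matrix.mul_sub, Matrix.mul_one, smul_sub, hRJ]
        rw [← h3, ← hBdef, ← Matrix.mul_assoc, hRP, Matrix.sub_mul, Matrix.one_mul,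
          smul_sub, Matrix.smul_mul, smul_smul, Matrix.mul_assoc]
      have hval : (v ᵥ* (1 + (ε⁻¹ - 1) • (1 - P))⁻¹) ⬝ᵥ x0 - v ⬝ᵥ (J *ᵥ x0)
          = ε * (v ⬝ᵥ (B *ᵥ x0)) - (ε * ε) * (v ⬝ᵥ (R *ᵥ (P *ᵥ (B *ᵥ x0)))) := by
        rw [hinv, ← Matrix.dotProduct_mulVec, ← dotProduct_sub, ← Matrix.sub_mulVec,
          hkey, Matrix.sub_mulVec, dotProduct_sub, Matrix.smul_mulVec,
          Matrix.smul_mulVec, dotProduct_smul, dotProduct_smul,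
          Matrix.mulVec_mulVec, Matrix.mulVec_mulVec]
        simp [smul_eq_mul, Matrix.mul_assoc]
      rw [Real.norm_eq_abs, hval]
      have e1 : |v ⬝ᵥ (B *ᵥ x0)| ≤ ‖B *ᵥ x0‖ := dist_dot_bound hv hvsum _
      have e2 : |v ⬝ᵥ (R *ᵥ (P *ᵥ (B *ᵥ x0)))| ≤ ε⁻¹ * ‖B *ᵥ x0‖ := by
        refine (dist_dot_bound hv hvsum _).trans ?_
        have h4 := inv_mulVec_norm hP (t := 1 - ε) (by linarith) (by linarith)
          (P *ᵥ (B *ᵥ x0))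
        rw [sub_sub_cancel] at h4
        refine (h4.trans ?_)
        exact mul_le_mul_of_nonneg_left (stoch_mulVec_norm hP _) (inv_nonneg.2 hε0.le)
      have habs : |ε * (v ⬝ᵥ (B *ᵥ x0)) - ε * ε * (v ⬝ᵥ (R *ᵥ (P *ᵥ (B *ᵥ x0))))|
          ≤ ε * |v ⬝ᵥ (B *ᵥ x0)| + ε * ε * |v ⬝ᵥ (R *ᵥ (P *ᵥ (B *ᵥ x0)))| := by
        calc |ε * (v ⬝ᵥ (B *ᵥ x0)) - ε * ε * (v ⬝ᵥ (R *ᵥ (P *ᵥ (B *ᵥ x0))))|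
            ≤ |ε * (v ⬝ᵥ (B *ᵥ x0))| + |ε * ε * (v ⬝ᵥ (R *ᵥ (P *ᵥ (B *ᵥ x0))))| :=
              abs_sub _ _
          _ = ε * |v ⬝ᵥ (B *ᵥ x0)| + ε * ε * |v ⬝ᵥ (R *ᵥ (P *ᵥ (B *ᵥ x0)))| := by
              rw [abs_mul, abs_mul, abs_mul, abs_of_pos hε0]
      have hee : ε * ε * (ε⁻¹ * ‖B *ᵥ x0‖) = ε * ‖B *ᵥ x0‖ := by
        field_simp
      have e3 : ε * ε * |v ⬝ᵥ (R *ᵥ (P *ᵥ (B *ᵥ x0)))| ≤ ε * ‖B *ᵥ x0‖ := by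
        rw [← hee]
        exact mul_le_mul_of_nonneg_left e2 (by positivity)
      have e4 : ε * |v ⬝ᵥ (B *ᵥ x0)| ≤ ε * ‖B *ᵥ x0‖ :=
        mul_le_mul_of_nonneg_left e1 hε0.le
      calc |ε * (v ⬝ᵥ (B *ᵥ x0)) - ε * ε * (v ⬝ᵥ (R *ᵥ (P *ᵥ (B *ᵥ x0))))|
          ≤ ε * ‖B *ᵥ x0‖ + ε * ‖B *ᵥ x0‖ := habs.trans (by linarith)
        _ = (2 * ‖B *ᵥ x0‖) * ε := by ring
    · have h9 : Continuous (fun ε : ℝ => (2 * ‖B *ᵥ x0‖) * ε) :=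
        continuous_const.mul continuous_id
      have hcont : Tendsto (fun ε : ℝ => (2 * ‖B *ᵥ x0‖) * ε) (𝓝 0) (𝓝 0) := by
        have := h9.tendsto (0 : ℝ)
        simpa using this
      exact hcont.mono_left nhdsWithin_le_nhds
  -- ===================== Part 3 =====================
  refine ⟨part1, part2, fun hveq => ?_⟩
  have heq : (v ᵥ* J) ⬝ᵥ x0 = (n : ℝ)⁻¹ * ∑ j, (∑ i, J i j) * x0 j := by
    subst hveq
    have h1 : ∀ j, ((fun _ : Fin n => (n : ℝ)⁻¹) ᵥ* J) j = ∑ i, (n : ℝ)⁻¹ * J i j := by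
      intro j; rfl
    have h2 : ((fun _ : Fin n => (n : ℝ)⁻¹) ᵥ* J) ⬝ᵥ x0
        = ∑ j, (∑ i, (n : ℝ)⁻¹ * J i j) * x0 j := by
      rw [dotProduct]
      exact Finset.sum_congr rfl fun j _ => by rw [h1]
    rw [h2, Finset.mul_sum]
    refine Finset.sum_congr rfl fun j _ => ?_
    rw [← Finset.mul_sum, mul_assoc]
  rw [← heq]
  exact part2
end
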